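/- arXiv:math/0409053 — 2 statements merged into one kernel-verified Lean document; each statement's English description precedes it below -/
import Mathlib

section
/- Assume the pair C, C^du is good for integrating g. Then the coordinate ring of matrix coefficients F[M] is an integral domain (it has no zero divisors); consequently the Tannaka monoid M is irreducible in its Zariski topology. -/
open TensorProduct

attribute [local instance 100] LieRing.ofAssociativeRing

universe u v w

/-- The data of a (full sub)category `C` of `g`-modules together with a category of duals:
an index type `ι`, for each index a `g`-module `V i`, and a chosen point-separating
subspace `du i` of the full linear dual of `V i`. -/
structure TannakaSetting (F : Type u) [Field F] (g : Type v) [LieRing g] [LieAlgebra F g] where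
  ι : Type w
  V : ι → Type w
  [iAdd : ∀ i, AddCommGroup (V i)]
  [iMod : ∀ i, Module F (V i)]
  ρ : ∀ i, g →ₗ⁅F⁆ Module.End F (V i)
  du : ∀ i, Submodule F (Module.Dual F (V i))

attribute [instance] TannakaSetting.iAdd TannakaSetting.iMod

namespace TannakaSetting

variable {F : Type u} [Field F] {g : Type v} [LieRing g] [LieAlgebra F g]
variable (D : TannakaSetting F g)

/-- `g`-equivariant linear maps between objects of the category. -/
def IsHom {i j : D.ι} (f : D.V i →ₗ[F] D.V j) : Prop :=
  ∀ x : g, f ∘ₗ (D.ρ i x : Module.End F (D.V i)) = (D.ρ j x : Module.End F (D.V j)) ∘ₗ f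

/-- An endomorphism of `V i` lies in `End_{V^du}(V)`, i.e. its transpose preserves
the chosen dual subspace. -/
def PreservesDu (i : D.ι) (f : Module.End F (D.V i)) : Prop :=
  ∀ φ ∈ D.du i, f.dualMap φ ∈ D.du i

/-- The action of `x ∈ g` on a tensor product of two objects. -/
noncomputable def tensorρ (i j : D.ι) (x : g) : Module.End F (D.V i ⊗[F] D.V j) :=
  TensorProduct.map (D.ρ i x) LinearMap.id + TensorProduct.map LinearMap.id (D.ρ j x)

/-- `e` realizes `V k` as a tensor product of the `g`-modules `V i` and `V j`. -/
def IsTensorProd (i j k : D.ι) (e : D.V k ≃ₗ[F] (D.V i ⊗[F] D.V j)) : Prop :=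
  ∀ x : g, e.toLinearMap ∘ₗ (D.ρ k x : Module.End F (D.V k)) = D.tensorρ i j x ∘ₗ e.toLinearMap

/-- `e` realizes `V k` as a direct sum of the `g`-modules `V i` and `V j`. -/
def IsSumProd (i j k : D.ι) (e : D.V k ≃ₗ[F] (D.V i × D.V j)) : Prop :=
  ∀ x : g, e.toLinearMap ∘ₗ (D.ρ k x : Module.End F (D.V k)) =
    ((D.ρ i x : Module.End F (D.V i)).prodMap (D.ρ j x : Module.End F (D.V j))) ∘ₗ e.toLinearMap

/-- `V i` is a one-dimensional trivial `g`-module. -/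
def IsTrivOneDim (i : D.ι) : Prop :=
  Module.finrank F (D.V i) = 1 ∧ ∀ x : g, (D.ρ i x : Module.End F (D.V i)) = 0

/-- The functional `φ ⊗ ψ` on a tensor product. -/
noncomputable def tensorDual {i j : D.ι} (φ : Module.Dual F (D.V i))
    (ψ : Module.Dual F (D.V j)) : Module.Dual F (D.V i ⊗[F] D.V j) :=
  TensorProduct.dualDistrib F (D.V i) (D.V j) (φ ⊗ₜ[F] ψ)

/-- The axioms on the pair of categories `C`, `C^du`:
`C` is closed under isomorphism, (binary) direct sums, tensor products, submodules,
contains a one-dimensional trivial module, `g` acts faithfully, and the duals separate points,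
are stable under the transposed `g`-action and under transposes of morphisms, and are compatible
with direct sums and tensor products. -/
structure IsGoodSetting : Prop where
  separating : ∀ (i : D.ι) (v : D.V i), v ≠ 0 → ∃ φ ∈ D.du i, φ v ≠ 0
  du_g : ∀ (i : D.ι) (x : g), D.PreservesDu i (D.ρ i x)
  du_hom : ∀ (i j : D.ι) (f : D.V i →ₗ[F] D.V j), D.IsHom f →
    ∀ ψ ∈ D.du j, f.dualMap ψ ∈ D.du i
  faithful : ∀ x : g, (∀ i, (D.ρ i x : Module.End F (D.V i)) = 0) → x = 0
  exists_triv : ∃ i, D.IsTrivOneDim i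
  exists_sum : ∀ i j : D.ι, ∃ (k : D.ι) (e : D.V k ≃ₗ[F] (D.V i × D.V j)), D.IsSumProd i j k e
  exists_tensor : ∀ i j : D.ι,
    ∃ (k : D.ι) (e : D.V k ≃ₗ[F] (D.V i ⊗[F] D.V j)), D.IsTensorProd i j k e
  du_tensor : ∀ (i j k : D.ι) (e : D.V k ≃ₗ[F] (D.V i ⊗[F] D.V j)), D.IsTensorProd i j k e →
    ∀ φ ∈ D.du i, ∀ ψ ∈ D.du j, e.toLinearMap.dualMap (D.tensorDual φ ψ) ∈ D.du k
  du_sum : ∀ (i j k : D.ι) (e : D.V k ≃ₗ[F] (D.V i × D.V j)), D.IsSumProd i j k e →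
    ∀ ξ : Module.Dual F (D.V k), ξ ∈ D.du k ↔
      ∃ φ ∈ D.du i, ∃ ψ ∈ D.du j,
        ξ = e.toLinearMap.dualMap
          ((LinearMap.fst F (D.V i) (D.V j)).dualMap φ +
            (LinearMap.snd F (D.V i) (D.V j)).dualMap ψ)
  submod_closed : ∀ (i : D.ι) (U : Submodule F (D.V i)), (∀ x : g, ∀ u ∈ U, D.ρ i x u ∈ U) →
    ∃ (k : D.ι) (e : D.V k ≃ₗ[F] ↥U), ∀ (x : g) (v : D.V k),
      (↑(e ((D.ρ k x) v)) : D.V i) = D.ρ i x ↑(e v)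
  isoClosed : ∀ (W : Type w) [AddCommGroup W] [Module F W] (ρW : g →ₗ⁅F⁆ Module.End F W)
    (i : D.ι) (e : D.V i ≃ₗ[F] W), (∀ (x : g) (v : D.V i), e (D.ρ i x v) = ρW x (e v)) →
    ∃ (k : D.ι) (e' : D.V k ≃ₗ[F] W), ∀ (x : g) (v : D.V k), e' (D.ρ k x v) = ρW x (e' v)

/-- The algebra `Nat` of natural transformations: families of endomorphisms
`m i ∈ End_{V^du}(V i)` commuting with all `g`-equivariant maps between objects. -/
def NatAlg : Set (∀ i, Module.End F (D.V i)) :=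
  { m | (∀ i, D.PreservesDu i (m i)) ∧
        ∀ (i j : D.ι) (f : D.V i →ₗ[F] D.V j), D.IsHom f → f ∘ₗ m i = m j ∘ₗ f }

/-- The Tannaka monoid `M`: natural transformations compatible with tensor products and
acting as the identity on trivial one-dimensional modules. -/
def M : Set (∀ i, Module.End F (D.V i)) :=
  { m | m ∈ D.NatAlg ∧
        (∀ (i j k : D.ι) (e : D.V k ≃ₗ[F] (D.V i ⊗[F] D.V j)), D.IsTensorProd i j k e →
          e.toLinearMap ∘ₗ m k = TensorProduct.map (m i) (m j) ∘ₗ e.toLinearMap) ∧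
        (∀ i, D.IsTrivOneDim i → m i = 1) }

/-- The matrix coefficient `f_{φ v}` as a function on the Tannaka monoid `M`. -/
def matCoef (i : D.ι) (φ : Module.Dual F (D.V i)) (v : D.V i) : ↥D.M → F :=
  fun m => φ (m.1 i v)

/-- The coordinate ring `F[M]` of matrix coefficients (a set of functions on `M`). -/
def coordRing : Set (↥D.M → F) :=
  { f | ∃ (i : D.ι) (φ : Module.Dual F (D.V i)) (v : D.V i), φ ∈ D.du i ∧ f = D.matCoef i φ v }

/-- The Lie algebra `Lie(M)` of the Tannaka monoid. -/
def LieM : Set (∀ i, Module.End F (D.V i)) :=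
  { x | x ∈ D.NatAlg ∧
        (∀ (i j k : D.ι) (e : D.V k ≃ₗ[F] (D.V i ⊗[F] D.V j)), D.IsTensorProd i j k e →
          e.toLinearMap ∘ₗ x k =
            (TensorProduct.map (x i) LinearMap.id +
              TensorProduct.map LinearMap.id (x j)) ∘ₗ e.toLinearMap) ∧
        (∀ i, D.IsTrivOneDim i → x i = 0) ∧
        (∃ δ : (↥D.M → F) → F, ∀ (i : D.ι) (φ : Module.Dual F (D.V i)) (v : D.V i),
          φ ∈ D.du i → δ (D.matCoef i φ v) = φ (x i v)) }

/-- The Lie algebra `Lie(N)` of a submonoid `N ⊆ M`: those `x ∈ Lie(M)` whose derivation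
`δ_x` annihilates the vanishing ideal `I(N) ⊆ F[M]`. -/
def LieOf (N : Set (↥D.M)) : Set (∀ i, Module.End F (D.V i)) :=
  { x | x ∈ D.LieM ∧ ∀ (i : D.ι) (φ : Module.Dual F (D.V i)) (v : D.V i), φ ∈ D.du i →
      (∀ n ∈ N, D.matCoef i φ v n = 0) → φ (x i v) = 0 }

/-- The unit group `M^×` of the Tannaka monoid, as a subset of `M`. -/
def unitsSet : Set (↥D.M) :=
  { m | ∃ n : ↥D.M, m.1 * n.1 = 1 ∧ n.1 * m.1 = 1 }

/-- The pair `C`, `C^du` is good for integrating `g`: `g ⊆ Lie(M)`. -/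
def Good : Prop := ∀ x : g, (fun i => (D.ρ i x : Module.End F (D.V i))) ∈ D.LieM

/-- The pair `C`, `C^du` is very good for integrating `g`: `g ⊆ Lie(M^×)`. -/
def VeryGood : Prop :=
  ∀ x : g, (fun i => (D.ρ i x : Module.End F (D.V i))) ∈ D.LieOf D.unitsSet

/-- A subset `S ⊆ M` is Zariski dense in `M`. -/
def DenseIn (S : Set (↥D.M)) : Prop :=
  ∀ f ∈ D.coordRing, (∀ m ∈ S, f m = 0) → ∀ m, f m = 0

theorem one_mem_M : (1 : ∀ i, Module.End F (D.V i)) ∈ D.M := by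
  refine ⟨⟨?_, ?_⟩, ?_, ?_⟩
  · intro i φ hφ
    simpa [Module.End.one_eq_id] using hφ
  · intro i j f _
    ext v
    simp
  · intro i j k e _
    ext v
    simp [TensorProduct.map_one]
  · intro i _
    rfl

/-- The unit of the Tannaka monoid as an element of the subtype `↥M`. -/
def oneM : ↥D.M := ⟨1, D.one_mem_M⟩

end TannakaSetting


open Finset

section EndAux

variable {F : Type*} [Field F] {V : Type*} [AddCommGroup V] [Module F V]

/-- Coefficients of `(A + t • B) ^ m` as a polynomial in `t`. -/
noncomputable def Eword (A B : Module.End F V) : ℕ → ℕ → Module.End F V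
  | 0, 0 => 1
  | 0, _ + 1 => 0
  | m + 1, 0 => A * Eword A B m 0
  | m + 1, j + 1 => A * Eword A B m (j + 1) + B * Eword A B m j

lemma Eword_zero_of_lt (A B : Module.End F V) : ∀ m j, m < j → Eword A B m j = 0 := by
  intro m
  induction m with
  | zero => intro j hj; match j, hj with
    | j + 1, _ => rfl
  | succ m ih =>
    intro j hj
    match j, hj with
    | j + 1, hj =>
      show A * Eword A B m (j + 1) + B * Eword A B m j = 0
      rw [ih (j + 1) (by omega), ih j (by omega), mul_zero, mul_zero, add_zero]

lemma Eword_zero_right (A B : Module.End F V) (m : ℕ) : Eword A B m 0 = A ^ m := by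
  induction m with
  | zero => rfl
  | succ m ih => show A * Eword A B m 0 = _; rw [ih, ← pow_succ']

lemma Eword_diag (A B : Module.End F V) (m : ℕ) : Eword A B m m = B ^ m := by
  induction m with
  | zero => rfl
  | succ m ih =>
    show A * Eword A B m (m + 1) + B * Eword A B m m = _
    rw [Eword_zero_of_lt A B m (m + 1) (by omega), mul_zero, zero_add, ih, ← pow_succ']

lemma Eword_one (A B : Module.End F V) (m : ℕ) :
    Eword A B m 1 = ∑ a ∈ range m, A ^ (m - 1 - a) * B * A ^ a := by
  induction m with
  | zero => simp [Eword]
  | succ m ih =>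
    show A * Eword A B m 1 + B * Eword A B m 0 = _
    rw [ih, Eword_zero_right, sum_range_succ, mul_sum]
    congr 1
    · apply Finset.sum_congr rfl
      intro a ha
      rw [← mul_assoc, ← mul_assoc, ← pow_succ']
      congr 3
      have := mem_range.mp ha
      omega
    · simp [Nat.sub_self]

lemma Eword_expand (A B : Module.End F V) (t : F) (m : ℕ) :
    (A + t • B) ^ m = ∑ j ∈ range (m + 1), t ^ j • Eword A B m j := by
  induction m with
  | zero => simp [Eword]
  | succ m ih =>
    rw [pow_succ', ih, mul_sum]
    have : ∀ j ∈ range (m + 1), (A + t • B) * (t ^ j • Eword A B m j)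
        = t ^ j • (A * Eword A B m j) + t ^ (j + 1) • (B * Eword A B m j) := by
      intro j _
      rw [add_mul, smul_mul_assoc, mul_smul_comm, mul_smul_comm, smul_smul, pow_succ']
    rw [Finset.sum_congr rfl this, Finset.sum_add_distrib]
    rw [Finset.sum_range_succ' (fun j => t ^ j • Eword A B (m + 1) j)]
    have h1 : ∑ j ∈ range (m + 1), t ^ (j + 1) • Eword A B (m + 1) (j + 1)
        = ∑ j ∈ range (m + 1), (t ^ (j + 1) • (A * Eword A B m (j + 1))
            + t ^ (j + 1) • (B * Eword A B m j)) := by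
      apply Finset.sum_congr rfl
      intro j _
      show t ^ (j + 1) • (A * Eword A B m (j + 1) + B * Eword A B m j) = _
      rw [smul_add]
    rw [h1, Finset.sum_add_distrib]
    have h2 : (t ^ 0 • Eword A B (m + 1) 0 : Module.End F V) = t ^ 0 • (A * Eword A B m 0) := rfl
    rw [h2]
    have h3 : ∑ j ∈ range (m + 1), t ^ j • (A * Eword A B m j)
        = ∑ j ∈ range (m + 1), t ^ (j + 1) • (A * Eword A B m (j + 1))
          + t ^ 0 • (A * Eword A B m 0) := by
      rw [Finset.sum_range_succ (fun j => t ^ (j + 1) • (A * Eword A B m (j + 1))) m,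
        Eword_zero_of_lt A B m (m + 1) (by omega), mul_zero, smul_zero, add_zero,
        Finset.sum_range_succ' (fun j => t ^ j • (A * Eword A B m j)) m]
    rw [h3]
    abel

end EndAux

open Finset

section EndAux2
variable {F : Type*} [Field F] {V : Type*} [AddCommGroup V] [Module F V]

/-- Iterated commutator `[A, [A, ..., [A, B]]]`. -/
def adPow (A : Module.End F V) : ℕ → Module.End F V → Module.End F V
  | 0, B => B
  | k + 1, B => A * adPow A k B - adPow A k B * A

lemma pow_mul_rearrange (A B : Module.End F V) (a : ℕ) :
    A ^ a * B = ∑ k ∈ range (a + 1), a.choose k • (adPow A k B * A ^ (a - k)) := by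
  induction a with
  | zero => simp [adPow]
  | succ a ih =>
    have key : A ^ (a + 1) * B = A * (A ^ a * B) := by rw [← mul_assoc, ← pow_succ']
    rw [key, ih, mul_sum]
    have step : ∀ k ∈ range (a + 1), A * (a.choose k • (adPow A k B * A ^ (a - k)))
        = a.choose k • (adPow A (k + 1) B * A ^ (a - k))
          + a.choose k • (adPow A k B * A ^ (a + 1 - k)) := by
      intro k hk
      have hk' : k ≤ a := by have := mem_range.mp hk; omega
      have hA : A * adPow A k B = adPow A (k + 1) B + adPow A k B * A := by
        show _ = (A * adPow A k B - adPow A k B * A) + adPow A k B * A; abel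
      have e1 : adPow A k B * A * A ^ (a - k) = adPow A k B * A ^ (a + 1 - k) := by
        rw [mul_assoc, ← pow_succ']
        have : a + 1 - k = (a - k) + 1 := by omega
        rw [this, pow_succ']
      rw [mul_smul_comm, ← mul_assoc, hA, add_mul, smul_add, e1]
    rw [Finset.sum_congr rfl step, Finset.sum_add_distrib]
    have rhs1 : ∑ k ∈ range (a + 2), (a + 1).choose k • (adPow A k B * A ^ (a + 1 - k))
        = ∑ k ∈ range (a + 1), (a + 1).choose (k + 1) • (adPow A (k + 1) B * A ^ (a - k))
          + adPow A 0 B * A ^ (a + 1) := by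
      rw [Finset.sum_range_succ' (fun k => (a + 1).choose k • (adPow A k B * A ^ (a + 1 - k)))]
      simp only [Nat.choose_zero_right, one_smul, Nat.sub_zero]
      congr 1
      apply Finset.sum_congr rfl
      intro k hk
      have : a + 1 - (k + 1) = a - k := by omega
      rw [this]
    have rhs2 : ∀ k ∈ range (a + 1), (a + 1).choose (k + 1) • (adPow A (k + 1) B * A ^ (a - k))
        = a.choose k • (adPow A (k + 1) B * A ^ (a - k))
          + a.choose (k + 1) • (adPow A (k + 1) B * A ^ (a - k)) := by
      intro k _
      rw [Nat.choose_succ_succ, add_smul]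
    have rhs3 : ∑ k ∈ range (a + 1), a.choose (k + 1) • (adPow A (k + 1) B * A ^ (a - k))
          + adPow A 0 B * A ^ (a + 1)
        = ∑ k ∈ range (a + 1), a.choose k • (adPow A k B * A ^ (a + 1 - k)) := by
      rw [Finset.sum_range_succ (fun k => a.choose (k + 1) • (adPow A (k + 1) B * A ^ (a - k))) a,
        Nat.choose_eq_zero_of_lt (by omega), zero_smul, add_zero,
        Finset.sum_range_succ' (fun k => a.choose k • (adPow A k B * A ^ (a + 1 - k))) a]
      simp only [Nat.choose_zero_right, one_smul, Nat.sub_zero]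
      congr 1
      apply Finset.sum_congr rfl
      intro k hk
      have : a + 1 - (k + 1) = a - k := by omega
      rw [this]
    rw [rhs1, Finset.sum_congr rfl rhs2, Finset.sum_add_distrib, add_assoc, rhs3]

/-- Coefficient extraction: if a polynomial expression lies in a subspace for every scalar,
then each coefficient does. -/
lemma coeff_mem_of_forall_mem [Infinite F] (S : Submodule F V) (N : ℕ) (c : ℕ → V)
    (h : ∀ t : F, (∑ j ∈ range N, t ^ j • c j) ∈ S) : ∀ j < N, c j ∈ S := by
  intro j hj
  have hker : S.mkQ (c j) = 0 → c j ∈ S := by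
    intro h0
    rw [← Submodule.ker_mkQ S]
    exact h0
  apply hker
  rw [← Module.forall_dual_apply_eq_zero_iff F]
  intro ζ
  set P : Polynomial F := ∑ k ∈ range N,
    Polynomial.C (ζ (S.mkQ (c k))) * Polynomial.X ^ k with hP
  have hev : ∀ t : F, P.eval t = 0 := by
    intro t
    have h0 : S.mkQ (∑ k ∈ range N, t ^ k • c k) = 0 := by
      rw [← Submodule.ker_mkQ S] at h
      exact h t
    have heq : P.eval t = ζ (S.mkQ (∑ k ∈ range N, t ^ k • c k)) := by
      rw [hP, Polynomial.eval_finset_sum, map_sum, map_sum]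
      apply Finset.sum_congr rfl
      intro k _
      rw [Polynomial.eval_mul, Polynomial.eval_C, Polynomial.eval_pow, Polynomial.eval_X,
        map_smul, map_smul, smul_eq_mul, mul_comm]
    rw [heq, h0, map_zero]
  have hP0 : P = 0 := by
    apply Polynomial.eq_zero_of_infinite_isRoot
    have : {x | P.IsRoot x} = Set.univ := Set.eq_univ_of_forall hev
    rw [this]
    exact Set.infinite_univ
  have hco := congrArg (fun q => Polynomial.coeff q j) hP0
  simp only [hP, Polynomial.finset_sum_coeff, Polynomial.coeff_C_mul, Polynomial.coeff_X_pow,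
    Polynomial.coeff_zero] at hco
  rw [Finset.sum_eq_single j (fun k _ hk => by rw [if_neg (fun h' => hk h'.symm), mul_zero])
    (fun hk => absurd hj (by simpa using hk))] at hco
  simpa using hco

/-- The binomial-convolution lemma: in characteristic zero, if the binomial convolutions of
two scalar sequences all vanish, one of the sequences vanishes. -/
lemma seq_zero_of_conv_zero [CharZero F] (α β : ℕ → F)
    (h : ∀ n, ∑ k ∈ range (n + 1), (n.choose k : F) * (α k * β (n - k)) = 0) :
    (∀ n, α n = 0) ∨ (∀ n, β n = 0) := by
  set σ := PowerSeries.mk (fun n => α n / n.factorial) with hσ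
  set τ := PowerSeries.mk (fun n => β n / n.factorial) with hτ
  have hmul : σ * τ = 0 := by
    ext n
    rw [PowerSeries.coeff_mul, map_zero]
    rw [Finset.Nat.sum_antidiagonal_eq_sum_range_succ_mk]
    have : ∀ k ∈ range (n + 1),
        (PowerSeries.coeff k σ) * (PowerSeries.coeff (n - k) τ)
          = (n.factorial : F)⁻¹ * ((n.choose k : F) * (α k * β (n - k))) := by
      intro k hk
      have hk' : k ≤ n := by have := mem_range.mp hk; omega
      rw [hσ, hτ, PowerSeries.coeff_mk, PowerSeries.coeff_mk]
      have hfact : (n.choose k : F) * ((k.factorial : F) * ((n - k).factorial : F))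
          = (n.factorial : F) := by
        rw [← Nat.cast_mul, ← Nat.cast_mul, Nat.cast_inj]
        rw [← mul_assoc]
        exact Nat.choose_mul_factorial_mul_factorial hk'
      have h1 : (k.factorial : F) ≠ 0 := Nat.cast_ne_zero.mpr (Nat.factorial_ne_zero k)
      have h2 : ((n - k).factorial : F) ≠ 0 := Nat.cast_ne_zero.mpr (Nat.factorial_ne_zero _)
      have h3 : (n.factorial : F) ≠ 0 := Nat.cast_ne_zero.mpr (Nat.factorial_ne_zero n)
      field_simp
      ring_nf
      rw [← hfact]
      ring
    rw [Finset.sum_congr rfl this, ← Finset.mul_sum, h n, mul_zero]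
  rcases mul_eq_zero.mp hmul with h0 | h0
  · left
    intro n
    have := congrArg (PowerSeries.coeff n) h0
    rw [hσ, PowerSeries.coeff_mk, map_zero] at this
    have h1 : (n.factorial : F) ≠ 0 := Nat.cast_ne_zero.mpr (Nat.factorial_ne_zero n)
    field_simp at this
    simpa using this
  · right
    intro n
    have := congrArg (PowerSeries.coeff n) h0
    rw [hτ, PowerSeries.coeff_mk, map_zero] at this
    have h1 : (n.factorial : F) ≠ 0 := Nat.cast_ne_zero.mpr (Nat.factorial_ne_zero n)
    field_simp at this
    simpa using this

end EndAux2


open TensorProduct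

variable {F : Type u} [Field F] [CharZero F] {g : Type v} [LieRing g] [LieAlgebra F g]


section Work
set_option linter.unusedSectionVars false
open Finset
variable (D : TannakaSetting F g)

open Finset in
theorem mul_mem_M' {m n : ∀ i, Module.End F (D.V i)} (hm : m ∈ D.M) (hn : n ∈ D.M) :
    (fun i => m i * n i) ∈ D.M := by
  obtain ⟨⟨hmdu, hmnat⟩, hmten, hmtriv⟩ := hm
  obtain ⟨⟨hndu, hnnat⟩, hnten, hntriv⟩ := hn
  refine ⟨⟨?_, ?_⟩, ?_, ?_⟩
  · intro i φ hφ
    have heq : (m i * n i).dualMap φ = (n i).dualMap ((m i).dualMap φ) := rfl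
    rw [heq]
    exact hndu i _ (hmdu i φ hφ)
  · intro i j f hf
    ext v
    have e1 := LinearMap.congr_fun (hmnat i j f hf) (n i v)
    have e2 := LinearMap.congr_fun (hnnat i j f hf) v
    simp only [LinearMap.comp_apply, Module.End.mul_apply] at e1 e2 ⊢
    rw [e2] at e1
    exact e1
  · intro i j k e he
    ext v
    have e1 := LinearMap.congr_fun (hmten i j k e he) (n k v)
    have e2 := LinearMap.congr_fun (hnten i j k e he) v
    simp only [LinearMap.comp_apply, Module.End.mul_apply, TensorProduct.map_mul] at e1 e2 ⊢
    rw [e2] at e1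
    exact e1
  · intro i hi
    have := hmtriv i hi
    have := hntriv i hi
    simp_all

theorem vanish_prop (hGood : D.Good) {i : D.ι} {φ : Module.Dual F (D.V i)} (hφ : φ ∈ D.du i)
    {v : D.V i} (h : ∀ m : ↥D.M, φ (m.1 i v) = 0) (x : g) :
    ∀ m : ↥D.M, φ (m.1 i ((D.ρ i x : Module.End F (D.V i)) v)) = 0 := by
  rintro ⟨mm, hm⟩
  set φ' : Module.Dual F (D.V i) := (mm i).dualMap φ with hφ'
  have hφ'du : φ' ∈ D.du i := hm.1.1 i φ hφ
  have hzero : D.matCoef i φ' v = D.matCoef i (0 : Module.Dual F (D.V i)) v := by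
    funext n
    show φ' (n.1 i v) = (0 : Module.Dual F (D.V i)) (n.1 i v)
    have h0 : φ ((mm i * n.1 i) v) = 0 := h ⟨fun j => mm j * n.1 j, mul_mem_M' D hm n.2⟩
    simpa [φ', LinearMap.dualMap_apply, Module.End.mul_apply] using h0
  obtain ⟨_, _, _, δ, hδ⟩ := hGood x
  have h1 := hδ i φ' v hφ'du
  have h2 := hδ i 0 v (Submodule.zero_mem _)
  rw [hzero, h2] at h1
  simpa [φ', LinearMap.dualMap_apply] using h1.symm

theorem vanish_pow (hGood : D.Good) {i : D.ι} {φ : Module.Dual F (D.V i)} (hφ : φ ∈ D.du i)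
    (x : g) (n : ℕ) :
    ∀ v : D.V i, (∀ m : ↥D.M, φ (m.1 i v) = 0) →
      ∀ m : ↥D.M, φ (m.1 i ((((D.ρ i x : Module.End F (D.V i))) ^ n) v)) = 0 := by
  induction n with
  | zero => intro v hv m; simpa using hv m
  | succ n ih =>
    intro v hv m
    have step := vanish_prop D hGood hφ hv x
    have h2 := ih ((D.ρ i x : Module.End F (D.V i)) v) step m
    rw [pow_succ, Module.End.mul_apply]
    exact h2

theorem vanish_of_powers (HG : D.IsGoodSetting) {i : D.ι} {φ : Module.Dual F (D.V i)}
    {v : D.V i}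
    (h : ∀ (x : g) (n : ℕ), φ ((((D.ρ i x : Module.End F (D.V i))) ^ n) v) = 0) :
    ∀ m : ↥D.M, φ (m.1 i v) = 0 := by
  classical
  set S : Submodule F (D.V i) :=
    Submodule.span F {u | ∃ (x : g) (n : ℕ), u = (((D.ρ i x : Module.End F (D.V i))) ^ n) v}
    with hS
  -- the iterated bracket realizes adPow
  have hadPow : ∀ (x : g) (k : ℕ) (y : g), ∃ z : g,
      adPow (D.ρ i x : Module.End F (D.V i)) k (D.ρ i y) = D.ρ i z := by
    intro x k
    induction k with
    | zero => exact fun y => ⟨y, rfl⟩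
    | succ k ih =>
      intro y
      obtain ⟨z, hz⟩ := ih y
      refine ⟨⁅x, z⁆, ?_⟩
      show (D.ρ i x : Module.End F (D.V i)) * adPow _ k (D.ρ i y)
          - adPow _ k (D.ρ i y) * (D.ρ i x : Module.End F (D.V i)) = _
      rw [hz, LieHom.map_lie (D.ρ i) x z, Ring.lie_def]
  -- key claim: generators are mapped into S by the g-action
  have key : ∀ (x : g) (n : ℕ) (y : g),
      (D.ρ i y : Module.End F (D.V i))
        ((((D.ρ i x : Module.End F (D.V i))) ^ n) v) ∈ S := by
    intro x n
    induction n using Nat.strong_induction_on with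
    | _ n IH =>
      intro y
      set A : Module.End F (D.V i) := D.ρ i x with hA
      set B : Module.End F (D.V i) := D.ρ i y with hB
      have hmem : ∀ t : F, (∑ j' ∈ range (n + 2), t ^ j' • (Eword A B (n + 1) j' v)) ∈ S := by
        intro t
        have h1 : ((A + t • B) ^ (n + 1)) v ∈ S := by
          have hz : A + t • B = (D.ρ i (x + t • y) : Module.End F (D.V i)) := by
            rw [map_add, map_smul]
          rw [hz]
          exact Submodule.subset_span ⟨x + t • y, n + 1, rfl⟩
        rw [Eword_expand] at h1
        simpa using h1
      have hE1 : Eword A B (n + 1) 1 v ∈ S :=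
        coeff_mem_of_forall_mem S (n + 2) _ hmem 1 (by omega)
      -- rewrite each summand
      have hsplit : ∀ a ∈ range (n + 1),
          (A ^ (n - a) * B * A ^ a) v
            = B ((A ^ n) v) + ∑ k ∈ range (n - a),
                ((n - a).choose (k + 1)) • ((adPow A (k + 1) B) ((A ^ (n - (k + 1))) v)) := by
        intro a ha
        have ha' : a ≤ n := by have := mem_range.mp ha; omega
        have h2 : (A ^ (n - a) * B * A ^ a) v
            = ∑ k ∈ range (n - a + 1),
                ((n - a).choose k) • ((adPow A k B) ((A ^ (n - k)) v)) := by
          rw [pow_mul_rearrange, Finset.sum_mul, LinearMap.sum_apply]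
          apply Finset.sum_congr rfl
          intro k hk
          have hk' : k ≤ n - a := by have := mem_range.mp hk; omega
          rw [smul_mul_assoc, LinearMap.smul_apply]
          congr 1
          rw [mul_assoc, ← pow_add]
          have : n - a - k + a = n - k := by omega
          rw [this, Module.End.mul_apply]
        rw [h2, Finset.sum_range_succ'
          (fun k => ((n - a).choose k) • ((adPow A k B) ((A ^ (n - k)) v))) (n - a)]
        rw [add_comm]
        congr 1
        show ((n - a).choose 0) • ((adPow A 0 B) ((A ^ (n - 0)) v)) = B ((A ^ n) v)
        simp [adPow]
      have hterm : ∀ a ∈ range (n + 1), (A ^ (n - a) * B * A ^ a) v - B ((A ^ n) v) ∈ S := by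
        intro a ha
        rw [hsplit a ha, add_sub_cancel_left]
        apply Submodule.sum_mem
        intro k hk
        have hkr := mem_range.mp hk
        have har := mem_range.mp ha
        rw [← Nat.cast_smul_eq_nsmul F]
        apply Submodule.smul_mem
        obtain ⟨z, hz⟩ := hadPow x (k + 1) y
        rw [hz]
        exact IH (n - (k + 1)) (by omega) z
      have hsum : ∑ a ∈ range (n + 1), ((A ^ (n - a) * B * A ^ a) v - B ((A ^ n) v)) ∈ S :=
        Submodule.sum_mem _ hterm
      have hEw : Eword A B (n + 1) 1 v = ∑ a ∈ range (n + 1), (A ^ (n - a) * B * A ^ a) v := by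
        rw [Eword_one, LinearMap.sum_apply]
        apply Finset.sum_congr rfl
        intro a ha
        have : n + 1 - 1 - a = n - a := by omega
        rw [this]
      have hfinal : ((n + 1 : ℕ) : F) • (B ((A ^ n) v)) ∈ S := by
        have hid : ∑ a ∈ range (n + 1), ((A ^ (n - a) * B * A ^ a) v - B ((A ^ n) v))
            = Eword A B (n + 1) 1 v - ((n + 1 : ℕ) : F) • (B ((A ^ n) v)) := by
          rw [Finset.sum_sub_distrib, ← hEw, Finset.sum_const, card_range,
            Nat.cast_smul_eq_nsmul]
        rw [hid] at hsum
        have := Submodule.sub_mem S hE1 hsum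
        simpa using this
      have hne : ((n + 1 : ℕ) : F) ≠ 0 := Nat.cast_ne_zero.mpr (Nat.succ_ne_zero n)
      have hdiv := Submodule.smul_mem S (((n + 1 : ℕ) : F))⁻¹ hfinal
      rwa [inv_smul_smul₀ hne] at hdiv
  -- S is a g-submodule
  have hinv : ∀ (y : g), ∀ u ∈ S, (D.ρ i y : Module.End F (D.V i)) u ∈ S := by
    intro y u hu
    induction hu using Submodule.span_induction with
    | mem u hu => obtain ⟨x, n, rfl⟩ := hu; exact key x n y
    | zero => simpa using S.zero_mem
    | add a b _ _ ha hb => rw [map_add]; exact S.add_mem ha hb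
    | smul c a _ ha => rw [map_smul]; exact S.smul_mem c ha
  obtain ⟨k, e, hke⟩ := HG.submod_closed i S (fun x u hu => hinv x u hu)
  set ι : D.V k →ₗ[F] D.V i := S.subtype ∘ₗ (e : D.V k ≃ₗ[F] ↥S).toLinearMap with hι
  have hιhom : D.IsHom ι := by
    intro x
    ext u
    show (↑(e ((D.ρ k x : Module.End F (D.V k)) u)) : D.V i)
      = (D.ρ i x : Module.End F (D.V i)) ↑(e u)
    exact hke x u
  have hSker : S ≤ LinearMap.ker φ := by
    rw [hS, Submodule.span_le]
    rintro u ⟨x, n, rfl⟩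
    exact LinearMap.mem_ker.mpr (h x n)
  intro m
  have hv : v ∈ S := Submodule.subset_span ⟨(0 : g), 0, by simp⟩
  have hnat := m.2.1.2 k i ι hιhom
  set s₀ : ↥S := ⟨v, hv⟩ with hs₀
  have hιs : ι (e.symm s₀) = v := by
    rw [hι]
    simp [hs₀]
  have hm : m.1 i v = ι (m.1 k (e.symm s₀)) := by
    conv_lhs => rw [← hιs]
    exact (LinearMap.congr_fun hnat (e.symm s₀)).symm
  rw [hm]
  have : ι (m.1 k (e.symm s₀)) ∈ S := by
    rw [hι]
    simp only [LinearMap.comp_apply]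
    exact (e (m.1 k (e.symm s₀))).2
  exact hSker this

theorem evalSumC (c : ℕ → F) (N : ℕ) (t : F) :
    (∑ k ∈ range N, Polynomial.C (c k) * Polynomial.X ^ k).eval t
      = ∑ k ∈ range N, c k * t ^ k := by
  rw [Polynomial.eval_finset_sum]
  apply Finset.sum_congr rfl
  intro k _
  rw [Polynomial.eval_mul, Polynomial.eval_C, Polynomial.eval_pow, Polynomial.eval_X]

theorem coeffSumC (c : ℕ → F) (N j : ℕ) (hj : j < N) :
    (∑ k ∈ range N, Polynomial.C (c k) * Polynomial.X ^ k).coeff j = c j := by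
  rw [Polynomial.finset_sum_coeff]
  simp only [Polynomial.coeff_C_mul, Polynomial.coeff_X_pow]
  rw [Finset.sum_eq_single j (fun k _ hk => by rw [if_neg (fun h' => hk h'.symm), mul_zero])
    (fun hk => absurd hj (by simpa using hk))]
  simp

theorem coord_domain (HG : D.IsGoodSetting) (hGood : D.Good) :
    ∀ f ∈ D.coordRing, ∀ h ∈ D.coordRing, f * h = 0 → f = 0 ∨ h = 0 := by
  rintro f ⟨i, φ, v, hφ, rfl⟩ h ⟨j, ψ, w, hψ, rfl⟩ hfh
  obtain ⟨k, e, he⟩ := HG.exists_tensor i j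
  set ξ : Module.Dual F (D.V k) := e.toLinearMap.dualMap (D.tensorDual φ ψ) with hξdef
  have hξ : ξ ∈ D.du k := HG.du_tensor i j k e he φ hφ ψ hψ
  set u : D.V k := e.symm (v ⊗ₜ[F] w) with hu
  have hval : ∀ m : ↥D.M, ξ (m.1 k u) = φ (m.1 i v) * ψ (m.1 j w) := by
    intro m
    have hm := m.2.2.1 i j k e he
    have h1 : e (m.1 k u) = TensorProduct.map (m.1 i) (m.1 j) (e u) :=
      LinearMap.congr_fun hm u
    have h2 : e u = v ⊗ₜ[F] w := e.apply_symm_apply _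
    show (D.tensorDual φ ψ) (e (m.1 k u)) = _
    rw [h1, h2, TensorProduct.map_tmul]
    exact TensorProduct.dualDistrib_apply φ ψ _ _
  have hvan : ∀ m : ↥D.M, ξ (m.1 k u) = 0 := by
    intro m
    rw [hval m]
    have := congrFun hfh m
    simpa [TannakaSetting.matCoef] using this
  have hpowvan : ∀ (x : g) (n : ℕ),
      ξ ((((D.ρ k x : Module.End F (D.V k))) ^ n) u) = 0 := by
    intro x n
    have := vanish_pow D hGood hξ x n u hvan D.oneM
    simpa [TannakaSetting.oneM] using this
  -- binomial convolution identities
  have hconv : ∀ (x : g) (n : ℕ),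
      ∑ c ∈ range (n + 1), ((n.choose c : F))
        * (φ ((((D.ρ i x : Module.End F (D.V i))) ^ c) v)
            * ψ ((((D.ρ j x : Module.End F (D.V j))) ^ (n - c)) w)) = 0 := by
    intro x n
    set P : Module.End F (D.V i ⊗[F] D.V j) :=
      TensorProduct.map (D.ρ i x : Module.End F (D.V i)) LinearMap.id with hP
    set Q : Module.End F (D.V i ⊗[F] D.V j) :=
      TensorProduct.map LinearMap.id (D.ρ j x : Module.End F (D.V j)) with hQ
    have hPQ : Commute P Q := by
      show P * Q = Q * P
      apply TensorProduct.ext'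
      intro a b
      simp [hP, hQ, Module.End.mul_apply]
    have hcomp : ∀ n : ℕ,
        e.toLinearMap ∘ₗ ((D.ρ k x : Module.End F (D.V k)) ^ n)
          = ((P + Q) ^ n) ∘ₗ e.toLinearMap := by
      intro n
      induction n with
      | zero => ext z; simp
      | succ n ih =>
        rw [pow_succ', pow_succ']
        calc e.toLinearMap ∘ₗ ((D.ρ k x : Module.End F (D.V k))
                * ((D.ρ k x : Module.End F (D.V k)) ^ n))
            = (e.toLinearMap ∘ₗ (D.ρ k x : Module.End F (D.V k)))
                ∘ₗ ((D.ρ k x : Module.End F (D.V k)) ^ n) := by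
              ext z; simp [Module.End.mul_apply]
          _ = ((P + Q) ∘ₗ e.toLinearMap) ∘ₗ ((D.ρ k x : Module.End F (D.V k)) ^ n) := by
              rw [he x]; rfl
          _ = (P + Q) ∘ₗ (e.toLinearMap ∘ₗ ((D.ρ k x : Module.End F (D.V k)) ^ n)) := by
              rw [LinearMap.comp_assoc]
          _ = (P + Q) ∘ₗ (((P + Q) ^ n) ∘ₗ e.toLinearMap) := by rw [ih]
          _ = ((P + Q) * ((P + Q) ^ n)) ∘ₗ e.toLinearMap := by
              ext z; simp [Module.End.mul_apply]
    have hξn : ξ ((((D.ρ k x : Module.End F (D.V k))) ^ n) u)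
        = (D.tensorDual φ ψ) (((P + Q) ^ n) (v ⊗ₜ[F] w)) := by
      show (D.tensorDual φ ψ) (e ((((D.ρ k x : Module.End F (D.V k))) ^ n) u)) = _
      have h3 := LinearMap.congr_fun (hcomp n) u
      simp only [LinearMap.comp_apply, LinearEquiv.coe_coe] at h3
      rw [h3, show e u = v ⊗ₜ[F] w from e.apply_symm_apply _]
    have hbin : ((P + Q) ^ n) (v ⊗ₜ[F] w)
        = ∑ c ∈ range (n + 1), (n.choose c)
            • (((((D.ρ i x : Module.End F (D.V i))) ^ c) v)
                ⊗ₜ[F] ((((D.ρ j x : Module.End F (D.V j))) ^ (n - c)) w)) := by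
      rw [hPQ.add_pow, LinearMap.sum_apply]
      apply Finset.sum_congr rfl
      intro c _
      have hPc : P ^ c = TensorProduct.map ((D.ρ i x : Module.End F (D.V i)) ^ c)
          (LinearMap.id : D.V j →ₗ[F] D.V j) := by
        rw [hP, TensorProduct.map_pow]
        congr 1
        exact one_pow _
      have hQc : Q ^ (n - c) = TensorProduct.map (LinearMap.id : D.V i →ₗ[F] D.V i)
          ((D.ρ j x : Module.End F (D.V j)) ^ (n - c)) := by
        rw [hQ, TensorProduct.map_pow]
        congr 1
        exact one_pow _
      rw [Module.End.mul_apply, Module.End.mul_apply]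
      rw [show ((n.choose c : Module.End F (D.V i ⊗[F] D.V j))) (v ⊗ₜ[F] w)
          = (n.choose c) • (v ⊗ₜ[F] w) from Module.End.natCast_apply _ _]
      rw [map_nsmul, map_nsmul, hPc, hQc, TensorProduct.map_tmul, TensorProduct.map_tmul]
      simp
    rw [← hpowvan x n, hξn, hbin, map_sum]
    apply Finset.sum_congr rfl
    intro c _
    rw [map_nsmul, nsmul_eq_mul]
    congr 1
  have hdisj : ∀ x : g,
      (∀ n, φ ((((D.ρ i x : Module.End F (D.V i))) ^ n) v) = 0)
        ∨ (∀ n, ψ ((((D.ρ j x : Module.End F (D.V j))) ^ n) w) = 0) := by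
    intro x
    exact seq_zero_of_conv_zero _ _ (hconv x)
  have hglobal : (∀ (x : g) (n : ℕ), φ ((((D.ρ i x : Module.End F (D.V i))) ^ n) v) = 0)
      ∨ (∀ (x : g) (n : ℕ), ψ ((((D.ρ j x : Module.End F (D.V j))) ^ n) w) = 0) := by
    by_contra hc
    push_neg at hc
    obtain ⟨⟨x₀, n₀, hx₀⟩, ⟨y₀, m₀, hy₀⟩⟩ := hc
    set p : Polynomial F := ∑ c ∈ range (n₀ + 1), Polynomial.C
      (φ (Eword (D.ρ i x₀ : Module.End F (D.V i)) (D.ρ i y₀) n₀ c v)) * Polynomial.X ^ c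
      with hpdef
    set q : Polynomial F := ∑ c ∈ range (m₀ + 1), Polynomial.C
      (ψ (Eword (D.ρ j x₀ : Module.End F (D.V j)) (D.ρ j y₀) m₀ c w)) * Polynomial.X ^ c
      with hqdef
    have hpeval : ∀ t : F, p.eval t
        = φ ((((D.ρ i (x₀ + t • y₀) : Module.End F (D.V i))) ^ n₀) v) := by
      intro t
      rw [hpdef, evalSumC]
      have hz : (D.ρ i (x₀ + t • y₀) : Module.End F (D.V i))
          = (D.ρ i x₀ : Module.End F (D.V i)) + t • (D.ρ i y₀ : Module.End F (D.V i)) := by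
        rw [map_add, map_smul]
      rw [hz, Eword_expand]
      rw [LinearMap.sum_apply, map_sum]
      apply Finset.sum_congr rfl
      intro c _
      rw [LinearMap.smul_apply, map_smul, smul_eq_mul, mul_comm]
    have hqeval : ∀ t : F, q.eval t
        = ψ ((((D.ρ j (x₀ + t • y₀) : Module.End F (D.V j))) ^ m₀) w) := by
      intro t
      rw [hqdef, evalSumC]
      have hz : (D.ρ j (x₀ + t • y₀) : Module.End F (D.V j))
          = (D.ρ j x₀ : Module.End F (D.V j)) + t • (D.ρ j y₀ : Module.End F (D.V j)) := by
        rw [map_add, map_smul]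
      rw [hz, Eword_expand]
      rw [LinearMap.sum_apply, map_sum]
      apply Finset.sum_congr rfl
      intro c _
      rw [LinearMap.smul_apply, map_smul, smul_eq_mul, mul_comm]
    have hpq : p * q = 0 := by
      apply Polynomial.eq_zero_of_infinite_isRoot
      have : {t : F | (p * q).IsRoot t} = Set.univ := by
        apply Set.eq_univ_of_forall
        intro t
        show (p * q).eval t = 0
        rw [Polynomial.eval_mul]
        rcases hdisj (x₀ + t • y₀) with h0 | h0
        · rw [hpeval t, h0 n₀, zero_mul]
        · rw [hqeval t, h0 m₀, mul_zero]
      rw [this]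
      exact Set.infinite_univ
    rcases mul_eq_zero.mp hpq with h0 | h0
    · apply hx₀
      have := congrArg (fun r => Polynomial.coeff r 0) h0
      simp only [Polynomial.coeff_zero] at this
      rw [hpdef] at this
      rw [coeffSumC _ _ 0 (by omega)] at this
      rwa [Eword_zero_right] at this
    · apply hy₀
      have := congrArg (fun r => Polynomial.coeff r m₀) h0
      simp only [Polynomial.coeff_zero] at this
      rw [hqdef] at this
      rw [coeffSumC _ _ m₀ (by omega)] at this
      rwa [Eword_diag] at this
  rcases hglobal with h0 | h0
  · left
    funext m
    exact vanish_of_powers D HG h0 m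
  · right
    funext m
    exact vanish_of_powers D HG h0 m

end Work

/-- **`F[M]` is an integral domain; `M` is irreducible.**
Assume the pair `C`, `C^du` is good for integrating `g`.  Then the coordinate ring of matrix
coefficients `F[M]` has no zero divisors (and is nontrivial); consequently the Tannaka monoid
`M` is irreducible in its Zariski topology: it is nonempty, and it is not the union of the zero
sets of two functions of `F[M]` unless one of them vanishes identically. -/
theorem stmt_8 (D : TannakaSetting F g) (HG : D.IsGoodSetting) (hGood : D.Good) :
    -- `F[M]` is an integral domain:
    ((1 : ↥D.M → F) ≠ 0 ∧
      (∀ f ∈ D.coordRing, ∀ h ∈ D.coordRing, f * h = 0 → f = 0 ∨ h = 0)) ∧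
    -- consequently `M` is irreducible:
    (D.M.Nonempty ∧
      (∀ f ∈ D.coordRing, ∀ h ∈ D.coordRing,
        (∀ m : ↥D.M, f m = 0 ∨ h m = 0) →
        (∀ m : ↥D.M, f m = 0) ∨ (∀ m : ↥D.M, h m = 0))) := by
  refine ⟨⟨?_, coord_domain D HG hGood⟩, ⟨1, D.one_mem_M⟩, ?_⟩
  · intro hcon
    have h1 := congrFun hcon D.oneM
    simp only [Pi.one_apply, Pi.zero_apply] at h1
    exact one_ne_zero h1
  · intro f hf h hh hdisj
    have hfh : f * h = 0 := by
      funext m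
      rcases hdisj m with h0 | h0 <;> simp [Pi.mul_apply, h0]
    rcases coord_domain D HG hGood f hf h hh hfh with h0 | h0
    · left; intro m; simp [h0]
    · right; intro m; simp [h0]
end

section
/- Let x ∈ g, x ≠ 0, be such that for every g-module V contained in C the endomorphism x_V is locally nilpotent and exp(t·x_V) ∈ End_{V^du}(V) for all t ∈ F. Then: (a) for every t ∈ F there exists an element exp(tx) ∈ M which acts on every object V of C by exp(t·x_V); (b) equipping F with the coordinate ring of polynomial functions, the map u_x: (F,+) → M, t ↦ exp(tx), is a morphism of monoids and a closed embedding of sets with coordinate rings; (c) denoting by U_x the image of u_x, one has Lie(U_x) = F·x. In particular, x is an integrable locally finite element of g. -/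
open TensorProduct

attribute [instance] LieRing.ofAssociativeRing

universe u v w

open TensorProduct

set_option maxHeartbeats 1000000
set_option synthInstance.maxHeartbeats 400000

namespace TannakaSetting

variable {F : Type u} [Field F] {g : Type v} [LieRing g] [LieAlgebra F g]
variable (D : TannakaSetting F g)

/-- The index type of the category `C(F·e)`: finite-dimensional `e`-invariant subspaces of
objects of `C` (a skeleton of the category of `F·e`-modules isomorphic to such subspaces). -/
def SubIdx (e : g) : Type _ :=
  Σ i : D.ι, {U : Submodule F (D.V i) // FiniteDimensional F ↥U ∧ ∀ u ∈ U, D.ρ i e u ∈ U}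

/-- The underlying module of an object of `C(F·e)`. -/
abbrev subMod (e : g) (s : D.SubIdx e) : Type _ := ↥(s.2.1)

/-- The action of `e` on an object of `C(F·e)`. -/
noncomputable def subAct (e : g) (s : D.SubIdx e) : Module.End F (D.subMod e s) :=
  (D.ρ s.1 e : Module.End F (D.V s.1)).restrict (fun u hu => s.2.2.2 u hu)

/-- The Tannaka monoid `M(F·e)` of the category `C(F·e)` with its category of full duals:
families of endomorphisms natural with respect to all morphisms of `C(F·e)`, compatible with
tensor products, and acting as the identity on trivial one-dimensional modules. -/
def MFe (e : g) : Set (∀ s : D.SubIdx e, Module.End F (D.subMod e s)) :=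
  { m | (∀ (s s' : D.SubIdx e) (f : D.subMod e s →ₗ[F] D.subMod e s'),
          f ∘ₗ D.subAct e s = D.subAct e s' ∘ₗ f → f ∘ₗ m s = m s' ∘ₗ f) ∧
        (∀ (s s' s'' : D.SubIdx e)
            (E : D.subMod e s'' ≃ₗ[F] (TensorProduct F (D.subMod e s) (D.subMod e s'))),
          (E.toLinearMap ∘ₗ D.subAct e s'' =
            (TensorProduct.map (D.subAct e s) LinearMap.id +
              TensorProduct.map LinearMap.id (D.subAct e s')) ∘ₗ E.toLinearMap) →
          E.toLinearMap ∘ₗ m s'' = TensorProduct.map (m s) (m s') ∘ₗ E.toLinearMap) ∧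
        (∀ s : D.SubIdx e, Module.finrank F (D.subMod e s) = 1 → D.subAct e s = 0 →
          m s = 1) }

/-- A subset of `M(F·e)` is Zariski dense in `M(F·e)` (all duals being full duals). -/
def DenseMFe (e : g) (S : Set (∀ s : D.SubIdx e, Module.End F (D.subMod e s))) : Prop :=
  ∀ (s : D.SubIdx e) (ψ : Module.Dual F (D.subMod e s)) (u : D.subMod e s),
    (∀ d ∈ S, ψ (d s u) = 0) → ∀ m ∈ D.MFe e, ψ (m s u) = 0

/-- `f` is the endomorphism of the object `V i` of `C` induced by the element `d` of `M(F·e)`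
(through the action of `M(F·e)` on the locally finite `F·e`-module `V i`). -/
def IsInduced (e : g) (d : ∀ s : D.SubIdx e, Module.End F (D.subMod e s))
    (i : D.ι) (f : Module.End F (D.V i)) : Prop :=
  ∀ (U : Submodule F (D.V i)) (h1 : FiniteDimensional F ↥U)
    (h2 : ∀ u ∈ U, D.ρ i e u ∈ U) (u : ↥U),
    f ↑u = ((d ⟨i, ⟨U, h1, h2⟩⟩ u : ↥U) : D.V i)

/-- `e` is an integrable locally finite element of `g` with respect to `C`, `C^du`:
`e` acts locally finitely on every object of `C`, and there is a Zariski dense submonoid `S` of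
`M(F·e)` all whose elements induce endomorphisms of the objects of `C` lying in
`End_{V^du}(V)`. -/
def IsIntLocFin (e : g) : Prop :=
  (∀ (i : D.ι) (v : D.V i), ∃ U : Submodule F (D.V i),
    v ∈ U ∧ FiniteDimensional F ↥U ∧ ∀ u ∈ U, D.ρ i e u ∈ U) ∧
  ∃ S : Set (∀ s : D.SubIdx e, Module.End F (D.subMod e s)),
    S ⊆ D.MFe e ∧ 1 ∈ S ∧ (∀ a ∈ S, ∀ b ∈ S, a * b ∈ S) ∧ D.DenseMFe e S ∧
    ∀ d ∈ S, ∀ i : D.ι, ∃ f : Module.End F (D.V i), D.IsInduced e d i f ∧ D.PreservesDu i f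

/-- A parametrization corresponding to an integrable locally finite element `e` of `g`:
the data of a Zariski dense submonoid `S = D_e` of `M(F·e)` all whose elements induce
endomorphisms of the objects of `C` lying in `End_{V^du}(V)`, giving the injective morphism of
monoids `i_e : D_e → M`, `d ↦ (d_V)_V`. -/
structure Param (e : g) where
  S : Set (∀ s : D.SubIdx e, Module.End F (D.subMod e s))
  sub : S ⊆ D.MFe e
  one_mem : 1 ∈ S
  mul_mem : ∀ a ∈ S, ∀ b ∈ S, a * b ∈ S
  dense : D.DenseMFe e S
  lift : ∀ d ∈ S, ∀ i : D.ι,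
    ∃ f : Module.End F (D.V i), D.IsInduced e d i f ∧ D.PreservesDu i f

/-- The image `V_e = i_e(D_e) ⊆ M` of a parametrization. -/
def ParamImage (e : g) (P : D.Param e) : Set (∀ i, Module.End F (D.V i)) :=
  { p | p ∈ D.M ∧ ∃ d ∈ P.S, ∀ i, D.IsInduced e d i (p i) }

end TannakaSetting

namespace TannakaSetting

variable {F : Type u} [Field F] {g : Type v} [LieRing g] [LieAlgebra F g]
variable (D : TannakaSetting F g)

/-- `m ∈ M` is the element `exp(t x)`, i.e. it acts on every object `V` of `C` by the
(pointwise convergent) exponential series `exp(t x_V)`. -/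
def IsExpOf (x : g) (t : F) (m : ∀ i, Module.End F (D.V i)) : Prop :=
  m ∈ D.M ∧ ∀ (i : D.ι) (v : D.V i), ∃ N : ℕ, ∀ n ≥ N,
    m i v = ∑ k ∈ Finset.range n,
      (t ^ k * ((Nat.factorial k : F)⁻¹)) • (((D.ρ i x : Module.End F (D.V i)) ^ k) v)

end TannakaSetting

namespace S16

set_option maxHeartbeats 1000000
set_option linter.unusedSectionVars false

open Finset Polynomial

variable {F : Type u} [Field F] [CharZero F]

noncomputable def ec (t : F) (k : ℕ) : F := t ^ k * ((Nat.factorial k : F))⁻¹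

lemma ec_zero (t : F) : ec t 0 = 1 := by simp [ec]

lemma ec_one (t : F) : ec t 1 = t := by simp [ec]

lemma zero_ec {k : ℕ} (hk : k ≠ 0) : ec (0 : F) k = 0 := by simp [ec, zero_pow hk]

lemma fact_ne (k : ℕ) : ((Nat.factorial k : F)) ≠ 0 :=
  Nat.cast_ne_zero.2 (Nat.factorial_ne_zero k)

lemma ec_mul_ec (t t' : F) {m n : ℕ} (h : m ≤ n) :
    ec t m * ec t' (n - m) = t ^ m * t' ^ (n - m) * (n.choose m : F) * ((n.factorial : F))⁻¹ := by
  have key : ((n.choose m : F)) * (m.factorial : F) * ((n - m).factorial : F) =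
      (n.factorial : F) := by
    exact_mod_cast congrArg (Nat.cast (R := F)) (Nat.choose_mul_factorial_mul_factorial h)
  have h1 : ((m.factorial : F)) ≠ 0 := fact_ne m
  have h2 : (((n - m).factorial : F)) ≠ 0 := fact_ne (n - m)
  have h3 : ((n.factorial : F)) ≠ 0 := fact_ne n
  have hC : (n.choose m : F) * ((n.factorial : F))⁻¹
      = ((m.factorial : F))⁻¹ * (((n - m).factorial : F))⁻¹ := by
    field_simp
    linear_combination key
  rw [ec, ec, mul_assoc (t ^ m * t' ^ (n - m)), hC]
  ring

lemma ec_add (t t' : F) (n : ℕ) :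
    ec (t + t') n = ∑ m ∈ Finset.range (n + 1), ec t m * ec t' (n - m) := by
  rw [ec, add_pow, Finset.sum_mul]
  refine Finset.sum_congr rfl fun m hm => ?_
  rw [ec_mul_ec t t' (Nat.lt_succ_iff.1 (Finset.mem_range.1 hm))]

lemma ec_choose (t : F) {m n : ℕ} (h : m ≤ n) :
    ec t n * (n.choose m : F) = ec t m * ec t (n - m) := by
  rw [ec_mul_ec t t h, ec]
  have : t ^ n = t ^ m * t ^ (n - m) := by rw [← pow_add]; congr 1; omega
  rw [this]; ring

section Module

variable {W : Type*} [AddCommGroup W] [Module F W]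

/-- Partial sum of the exponential series, as an endomorphism. -/
noncomputable def pSE (a : Module.End F W) (t : F) (n : ℕ) : Module.End F W :=
  ∑ k ∈ Finset.range n, ec t k • a ^ k

lemma pSE_apply (a : Module.End F W) (t : F) (n : ℕ) (w : W) :
    pSE a t n w = ∑ k ∈ Finset.range n, ec t k • (a ^ k) w := by
  simp [pSE]

lemma kill_mono {a : Module.End F W} {w : W} {K k : ℕ} (hK : (a ^ K) w = 0) (h : K ≤ k) :
    (a ^ k) w = 0 := by
  have : a ^ k = a ^ (k - K) * a ^ K := by rw [← pow_add]; congr 1; omega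
  rw [this, Module.End.mul_apply, hK, map_zero]

lemma pSE_stable {a : Module.End F W} {K : ℕ} {w : W} (hK : (a ^ K) w = 0) {n n' : ℕ}
    (hKn : K ≤ n) (hnn' : n ≤ n') (t : F) : pSE a t n' w = pSE a t n w := by
  rw [pSE_apply, pSE_apply]
  refine (Finset.sum_subset (Finset.range_subset_range.2 hnn') fun k hk hk' => ?_).symm
  rw [kill_mono hK (by simp only [Finset.mem_range, not_lt] at hk'; omega), smul_zero]

/-- The exponential of `t • a` for a locally nilpotent endomorphism `a`. -/
noncomputable def lexp (a : Module.End F W) (h : ∀ w : W, ∃ n : ℕ, (a ^ n) w = 0) (t : F) :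
    Module.End F W where
  toFun w := pSE a t (h w).choose w
  map_add' w w' := by
    show pSE a t _ (w + w') = pSE a t _ w + pSE a t _ w'
    set N := max (h (w + w')).choose (max (h w).choose (h w').choose) with hN
    have e0 : pSE a t N (w + w') = pSE a t (h (w + w')).choose (w + w') :=
      pSE_stable (h (w + w')).choose_spec le_rfl (le_max_left _ _) t
    have e1 : pSE a t N w = pSE a t (h w).choose w :=
      pSE_stable (h w).choose_spec le_rfl (le_trans (le_max_left _ _) (le_max_right _ _)) t
    have e2 : pSE a t N w' = pSE a t (h w').choose w' :=
      pSE_stable (h w').choose_spec le_rfl (le_trans (le_max_right _ _) (le_max_right _ _)) t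
    rw [← e0, ← e1, ← e2, map_add]
  map_smul' c w := by
    show pSE a t _ (c • w) = c • pSE a t _ w
    set N := max (h (c • w)).choose (h w).choose with hN
    have e0 : pSE a t N (c • w) = pSE a t (h (c • w)).choose (c • w) :=
      pSE_stable (h (c • w)).choose_spec le_rfl (le_max_left _ _) t
    have e1 : pSE a t N w = pSE a t (h w).choose w :=
      pSE_stable (h w).choose_spec le_rfl (le_max_right _ _) t
    rw [← e0, ← e1, map_smul]

lemma lexp_def (a : Module.End F W) (h : ∀ w : W, ∃ n : ℕ, (a ^ n) w = 0) (t : F) (w : W) :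
    lexp a h t w = pSE a t (h w).choose w := rfl

lemma lexp_eq {a : Module.End F W} {h : ∀ w : W, ∃ n : ℕ, (a ^ n) w = 0} (t : F) {K n : ℕ}
    {w : W} (hK : (a ^ K) w = 0) (hn : K ≤ n) : lexp a h t w = pSE a t n w := by
  set N := max n (h w).choose with hN
  have e1 : pSE a t N w = pSE a t (h w).choose w :=
    pSE_stable (h w).choose_spec le_rfl (le_max_right _ _) t
  have e2 : pSE a t N w = pSE a t n w :=
    pSE_stable hK hn (le_max_left _ _) t
  rw [lexp_def, ← e1, e2]

section Natural

variable {W' : Type*} [AddCommGroup W'] [Module F W']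

lemma comp_pow_apply {f : W →ₗ[F] W'} {a : Module.End F W} {a' : Module.End F W'}
    (hf : ∀ w, f (a w) = a' (f w)) (n : ℕ) (w : W) : f ((a ^ n) w) = (a' ^ n) (f w) := by
  induction n with
  | zero => simp
  | succ n ih =>
    rw [pow_succ', pow_succ', Module.End.mul_apply, Module.End.mul_apply, hf, ih]

lemma pSE_natural {f : W →ₗ[F] W'} {a : Module.End F W} {a' : Module.End F W'}
    (hf : ∀ w, f (a w) = a' (f w)) (t : F) (n : ℕ) (w : W) :
    f (pSE a t n w) = pSE a' t n (f w) := by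
  rw [pSE_apply, pSE_apply, map_sum]
  exact Finset.sum_congr rfl fun k _ => by rw [map_smul, comp_pow_apply hf]

lemma lexp_natural {f : W →ₗ[F] W'} {a : Module.End F W} {a' : Module.End F W'}
    {h : ∀ w : W, ∃ n : ℕ, (a ^ n) w = 0} {h' : ∀ w : W', ∃ n : ℕ, (a' ^ n) w = 0}
    (hf : ∀ w, f (a w) = a' (f w)) (t : F) (w : W) :
    f (lexp a h t w) = lexp a' h' t (f w) := by
  obtain ⟨K, hK⟩ := h w
  have hK' : (a' ^ K) (f w) = 0 := by rw [← comp_pow_apply hf, hK, map_zero]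
  rw [lexp_eq t hK le_rfl, pSE_natural hf, lexp_eq t hK' le_rfl]

end Natural

lemma tri_to_square {A : Type*} [AddCommMonoid A] (f : ℕ → ℕ → A) (P Q N : ℕ)
    (hN : P + Q ≤ N) (hf : ∀ p q, P ≤ p ∨ Q ≤ q → f p q = 0) :
    ∑ n ∈ Finset.range N, ∑ m ∈ Finset.range (n + 1), f m (n - m)
      = ∑ p ∈ Finset.range N, ∑ q ∈ Finset.range N, f p q := by
  have hsq : ∑ p ∈ Finset.range N, ∑ q ∈ Finset.range N, f p q
      = ∑ pq ∈ (Finset.range N ×ˢ Finset.range N).filter (fun pq => pq.1 + pq.2 < N),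
          f pq.1 pq.2 := by
    rw [← Finset.sum_product']
    refine (Finset.sum_subset (Finset.filter_subset _ _) fun pq hpq hpq' => ?_).symm
    have hnlt : ¬ pq.1 + pq.2 < N := fun hlt => hpq' (Finset.mem_filter.2 ⟨hpq, hlt⟩)
    simp only [Finset.mem_product, Finset.mem_range] at hpq
    exact hf _ _ (by omega)
  have htri := Finset.sum_sigma' (Finset.range N) (fun n => Finset.range (n + 1))
    (fun n m => f m (n - m))
  rw [hsq, htri]
  refine Finset.sum_nbij' (fun x => (x.2, x.1 - x.2)) (fun y => (⟨y.1 + y.2, y.1⟩ : Σ _ : ℕ, ℕ))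
    ?_ ?_ ?_ ?_ ?_
  · rintro ⟨n, m⟩ ha
    simp only [Finset.mem_sigma, Finset.mem_range] at ha
    simp only [Finset.mem_filter, Finset.mem_product, Finset.mem_range]
    omega
  · rintro ⟨p, q⟩ ha
    simp only [Finset.mem_filter, Finset.mem_product, Finset.mem_range] at ha
    simp only [Finset.mem_sigma, Finset.mem_range]
    omega
  · rintro ⟨n, m⟩ ha
    simp only [Finset.mem_sigma, Finset.mem_range] at ha
    have h1 : m + (n - m) = n := by omega
    simp [h1]
  · rintro ⟨p, q⟩ ha
    simp [Nat.add_sub_cancel_left]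
  · rintro ⟨n, m⟩ ha
    rfl

lemma pSE_comm_add {a b : Module.End F W} (hc : Commute a b) {w : W} {P Q N : ℕ}
    (hPQ : P + Q ≤ N) (hv : ∀ p q : ℕ, P ≤ p ∨ Q ≤ q → (a ^ p) ((b ^ q) w) = 0) (t : F) :
    pSE (a + b) t N w
      = ∑ p ∈ Finset.range N, ∑ q ∈ Finset.range N,
          (ec t p * ec t q) • (a ^ p) ((b ^ q) w) := by
  have step : ∀ n, ec t n • ((a + b) ^ n) w
      = ∑ m ∈ Finset.range (n + 1), (ec t m * ec t (n - m)) • (a ^ m) ((b ^ (n - m)) w) := by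
    intro n
    rw [hc.add_pow, LinearMap.sum_apply, Finset.smul_sum]
    refine Finset.sum_congr rfl fun m hm => ?_
    have hmn : m ≤ n := Nat.lt_succ_iff.1 (Finset.mem_range.1 hm)
    rw [Module.End.mul_apply, Module.End.mul_apply, Module.End.natCast_apply,
      map_nsmul, map_nsmul, ← Nat.cast_smul_eq_nsmul F, smul_smul, ec_choose t hmn]
  rw [pSE_apply]
  calc ∑ n ∈ Finset.range N, ec t n • ((a + b) ^ n) w
      = ∑ n ∈ Finset.range N, ∑ m ∈ Finset.range (n + 1),
          (ec t m * ec t (n - m)) • (a ^ m) ((b ^ (n - m)) w) :=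
        Finset.sum_congr rfl fun n _ => step n
    _ = _ := tri_to_square (fun p q => (ec t p * ec t q) • (a ^ p) ((b ^ q) w)) P Q N hPQ
        fun p q hpq => by rw [hv p q hpq, smul_zero]

lemma pSE_pSE {a : Module.End F W} {w : W} {K N : ℕ} (hK : (a ^ K) w = 0)
    (hN : K + K ≤ N) (t t' : F) :
    pSE a (t + t') N w = pSE a t N (pSE a t' N w) := by
  have hRHS : pSE a t N (pSE a t' N w)
      = ∑ p ∈ Finset.range N, ∑ q ∈ Finset.range N,
          (ec t p * ec t' q) • (a ^ p) ((a ^ q) w) := by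
    rw [pSE_apply, pSE_apply]
    refine Finset.sum_congr rfl fun p _ => ?_
    rw [map_sum, Finset.smul_sum]
    refine Finset.sum_congr rfl fun q _ => ?_
    rw [map_smul, smul_smul]
  rw [hRHS, pSE_apply]
  calc ∑ n ∈ Finset.range N, ec (t + t') n • (a ^ n) w
      = ∑ n ∈ Finset.range N, ∑ m ∈ Finset.range (n + 1),
          (ec t m * ec t' (n - m)) • (a ^ m) ((a ^ (n - m)) w) := by
        refine Finset.sum_congr rfl fun n _ => ?_
        rw [ec_add, Finset.sum_smul]
        refine Finset.sum_congr rfl fun m hm => ?_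
        have hmn : m ≤ n := Nat.lt_succ_iff.1 (Finset.mem_range.1 hm)
        have hmm : m + (n - m) = n := by omega
        rw [← Module.End.mul_apply, ← pow_add, hmm]
    _ = _ := tri_to_square (fun p q => (ec t p * ec t' q) • (a ^ p) ((a ^ q) w)) K K N hN
        fun p q hpq => by
        rw [← Module.End.mul_apply, ← pow_add, kill_mono hK (by omega), smul_zero]

lemma pow_pSE_kill {a : Module.End F W} {w : W} {K : ℕ} (hK : (a ^ K) w = 0) (t : F) (n : ℕ) :
    (a ^ K) (pSE a t n w) = 0 := by
  rw [pSE_apply, map_sum]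
  refine Finset.sum_eq_zero fun k _ => ?_
  rw [map_smul, ← Module.End.mul_apply, ← pow_add, kill_mono hK (by omega), smul_zero]

lemma lexp_add (a : Module.End F W) (h : ∀ w : W, ∃ n : ℕ, (a ^ n) w = 0) (t t' : F) :
    lexp a h (t + t') = lexp a h t * lexp a h t' := by
  ext w
  obtain ⟨K, hK⟩ := h w
  rw [Module.End.mul_apply]
  rw [lexp_eq (t + t') hK (le_refl K |>.trans (Nat.le_add_right K K)),
    lexp_eq t' hK (Nat.le_add_right K K),
    lexp_eq t (pow_pSE_kill hK t' (K + K)) (Nat.le_add_right K K)]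
  exact pSE_pSE hK le_rfl t t'

lemma lexp_zero (a : Module.End F W) (h : ∀ w : W, ∃ n : ℕ, (a ^ n) w = 0) :
    lexp a h 0 = 1 := by
  ext w
  obtain ⟨K, hK⟩ := h w
  rw [lexp_eq 0 hK (le_max_left K 1), pSE_apply]
  rw [Finset.sum_eq_single_of_mem 0 (Finset.mem_range.2 (by omega))]
  · simp [ec_zero]
  · intro k _ hk
    rw [zero_ec hk, zero_smul]

lemma lexp_of_zero {a : Module.End F W} {h : ∀ w : W, ∃ n : ℕ, (a ^ n) w = 0}
    (ha : a = 0) (t : F) : lexp a h t = 1 := by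
  ext w
  have h1 : (a ^ 1) w = 0 := by rw [pow_one, ha]; rfl
  rw [lexp_eq t h1 le_rfl, pSE_apply, Finset.sum_range_one]
  simp [ec_zero]

end Module

section Tensor

variable {Wi Wj Wk : Type*} [AddCommGroup Wi] [Module F Wi] [AddCommGroup Wj] [Module F Wj]
  [AddCommGroup Wk] [Module F Wk]

lemma mapl_pow (f : Module.End F Wi) (p : ℕ) (u : Wi) (w : Wj) :
    ((TensorProduct.map f (LinearMap.id : Wj →ₗ[F] Wj)) ^ p) (u ⊗ₜ[F] w) = ((f ^ p) u) ⊗ₜ[F] w := by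
  induction p with
  | zero => simp
  | succ p ih => rw [pow_succ', Module.End.mul_apply, ih, TensorProduct.map_tmul, pow_succ',
      Module.End.mul_apply, LinearMap.id_apply]

lemma mapr_pow (gg : Module.End F Wj) (q : ℕ) (u : Wi) (w : Wj) :
    ((TensorProduct.map (LinearMap.id : Wi →ₗ[F] Wi) gg) ^ q) (u ⊗ₜ[F] w) = u ⊗ₜ[F] ((gg ^ q) w) := by
  induction q with
  | zero => simp
  | succ q ih => rw [pow_succ', Module.End.mul_apply, ih, TensorProduct.map_tmul, pow_succ',
      Module.End.mul_apply, LinearMap.id_apply]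

lemma map_commute (f : Module.End F Wi) (gg : Module.End F Wj) :
    Commute (TensorProduct.map f (LinearMap.id : Wj →ₗ[F] Wj))
      (TensorProduct.map (LinearMap.id : Wi →ₗ[F] Wi) gg) := by
  show _ * _ = _ * _
  rw [Module.End.mul_eq_comp, Module.End.mul_eq_comp, ← TensorProduct.map_comp,
    ← TensorProduct.map_comp]
  simp

lemma lexp_tensor (ai : Module.End F Wi) (aj : Module.End F Wj) (ak : Module.End F Wk)
    (hi : ∀ w, ∃ n, (ai ^ n) w = 0) (hj : ∀ w, ∃ n, (aj ^ n) w = 0)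
    (hk : ∀ w, ∃ n, (ak ^ n) w = 0)
    (e : Wk ≃ₗ[F] Wi ⊗[F] Wj)
    (he : e.toLinearMap ∘ₗ ak = (TensorProduct.map ai LinearMap.id
      + TensorProduct.map LinearMap.id aj) ∘ₗ e.toLinearMap) (t : F) :
    e.toLinearMap ∘ₗ (lexp ak hk t)
      = TensorProduct.map (lexp ai hi t) (lexp aj hj t) ∘ₗ e.toLinearMap := by
  set a := TensorProduct.map ai (LinearMap.id : Wj →ₗ[F] Wj) with ha
  set b := TensorProduct.map (LinearMap.id : Wi →ₗ[F] Wi) aj with hb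
  have hept : ∀ z, e.toLinearMap (ak z) = (a + b) (e.toLinearMap z) := fun z => by
    simpa using DFunLike.congr_fun he z
  have H : ∀ (u : Wi) (w : Wj),
      e.toLinearMap (lexp ak hk t (e.symm (u ⊗ₜ[F] w))) = (lexp ai hi t u) ⊗ₜ[F] (lexp aj hj t w) := by
    intro u w
    obtain ⟨P, hP⟩ := hi u
    obtain ⟨Q, hQ⟩ := hj w
    obtain ⟨Kv, hKv⟩ := hk (e.symm (u ⊗ₜ[F] w))
    set N := max (P + Q) Kv with hNdef
    have habv : ∀ p q : ℕ, (a ^ p) ((b ^ q) (u ⊗ₜ[F] w)) = ((ai ^ p) u) ⊗ₜ[F] ((aj ^ q) w) := by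
      intro p q
      rw [hb, mapr_pow, ha, mapl_pow]
    have e1 : e.toLinearMap (lexp ak hk t (e.symm (u ⊗ₜ[F] w)))
        = pSE (a + b) t N (u ⊗ₜ[F] w) := by
      rw [lexp_eq t hKv (le_max_right (P + Q) Kv), pSE_natural hept t]
      congr 1
      simp
    rw [e1, pSE_comm_add (map_commute ai aj) (le_max_left _ _) (fun p q hpq => by
      rw [habv]
      rcases hpq with hp | hq
      · rw [kill_mono hP hp, TensorProduct.zero_tmul]
      · rw [kill_mono hQ hq, TensorProduct.tmul_zero]) t]
    have e2 : ∀ p ∈ Finset.range N, ∑ q ∈ Finset.range N,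
        (ec t p * ec t q) • (a ^ p) ((b ^ q) (u ⊗ₜ[F] w))
        = (ec t p • (ai ^ p) u) ⊗ₜ[F] (pSE aj t N w) := by
      intro p _
      rw [pSE_apply, TensorProduct.tmul_sum]
      refine Finset.sum_congr rfl fun q _ => ?_
      rw [habv, mul_smul, TensorProduct.smul_tmul', TensorProduct.tmul_smul,
        TensorProduct.smul_tmul', TensorProduct.smul_tmul', smul_smul, smul_smul,
        mul_comm (ec t q) (ec t p)]
    rw [Finset.sum_congr rfl e2, ← TensorProduct.sum_tmul]
    rw [← pSE_apply, lexp_eq t hP (le_trans (Nat.le_add_right P Q) (le_max_left _ _)),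
      lexp_eq t hQ (le_trans (Nat.le_add_left Q P) (le_max_left _ _))]
  have heq : e.toLinearMap ∘ₗ (lexp ak hk t) ∘ₗ e.symm.toLinearMap
      = TensorProduct.map (lexp ai hi t) (lexp aj hj t) :=
    TensorProduct.ext' fun u w => by
      simpa using H u w
  ext v
  have := DFunLike.congr_fun heq (e v)
  simpa using this

end Tensor

section Qpoly

open Polynomial

/-- The canonical polynomial with coefficients `(k!)⁻¹ * b k`. -/
noncomputable def qPoly (N : ℕ) (b : ℕ → F) : Polynomial F :=
  ∑ k ∈ Finset.range N, Polynomial.C ((Nat.factorial k : F)⁻¹ * b k) * Polynomial.X ^ k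

lemma qPoly_eval (N : ℕ) (b : ℕ → F) (t : F) :
    (qPoly N b).eval t = ∑ k ∈ Finset.range N, ec t k * b k := by
  rw [qPoly, Polynomial.eval_finset_sum]
  exact Finset.sum_congr rfl fun k _ => by rw [Polynomial.eval_mul, Polynomial.eval_C,
    Polynomial.eval_pow, Polynomial.eval_X, ec]; ring

lemma qPoly_coeff {N k : ℕ} (b : ℕ → F) (hk : k < N) :
    (qPoly N b).coeff k = (Nat.factorial k : F)⁻¹ * b k := by
  rw [qPoly, Polynomial.finset_sum_coeff]
  rw [Finset.sum_congr rfl (fun j _ => by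
    rw [Polynomial.coeff_C_mul, Polynomial.coeff_X_pow, mul_ite, mul_one, mul_zero])]
  rw [Finset.sum_ite_eq (Finset.range N) k (fun j => (Nat.factorial j : F)⁻¹ * b j)]
  simp [hk]

lemma qPoly_coeff_eq_zero {N : ℕ} {b : ℕ → F} (h : ∀ t : F, (qPoly N b).eval t = 0)
    {k : ℕ} (hk : k < N) : b k = 0 := by
  have h0 : qPoly N b = 0 := Polynomial.funext fun r => by rw [h r, Polynomial.eval_zero]
  have := qPoly_coeff b hk
  rw [h0, Polynomial.coeff_zero] at this
  have hf : ((Nat.factorial k : F))⁻¹ ≠ 0 := inv_ne_zero (fact_ne k)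
  rcases mul_eq_zero.1 this.symm with h' | h'
  · exact absurd h' hf
  · exact h'

end Qpoly

end S16

variable {F : Type u} [Field F] [CharZero F] {g : Type v} [LieRing g] [LieAlgebra F g]

-- DLAYER
namespace S16

open Finset Polynomial TannakaSetting

section DLayer

variable (D : TannakaSetting F g) (x : g)
variable (hnilp : ∀ (i : D.ι) (v : D.V i), ∃ n : ℕ,
  ((D.ρ i x : Module.End F (D.V i)) ^ n) v = 0)

/-- The family `exp(t x)` of endomorphisms. -/
noncomputable def EE (t : F) : ∀ i, Module.End F (D.V i) :=
  fun i => lexp (D.ρ i x) (hnilp i) t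

lemma EE_apply (t : F) (i : D.ι) {K n : ℕ} {v : D.V i}
    (hK : ((D.ρ i x : Module.End F (D.V i)) ^ K) v = 0) (hn : K ≤ n) :
    EE D x hnilp t i v = pSE (D.ρ i x) t n v :=
  lexp_eq t hK hn

lemma EE_stab (t : F) (i : D.ι) (v : D.V i) :
    ∃ N : ℕ, ∀ n ≥ N, EE D x hnilp t i v = ∑ k ∈ Finset.range n,
      (t ^ k * ((Nat.factorial k : F)⁻¹)) • (((D.ρ i x : Module.End F (D.V i)) ^ k) v) := by
  obtain ⟨K, hK⟩ := hnilp i v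
  refine ⟨K, fun n hn => ?_⟩
  rw [EE_apply D x hnilp t i hK hn, pSE_apply]
  exact Finset.sum_congr rfl fun k _ => by rw [ec]

variable (hdu : ∀ (t : F) (i : D.ι) (f : Module.End F (D.V i)),
      (∀ v : D.V i, ∃ N : ℕ, ∀ n ≥ N,
        f v = ∑ k ∈ Finset.range n,
          (t ^ k * ((Nat.factorial k : F)⁻¹)) • (((D.ρ i x : Module.End F (D.V i)) ^ k) v)) →
      D.PreservesDu i f)

include hdu in
lemma EE_mem_M (t : F) : EE D x hnilp t ∈ D.M := by
  refine ⟨⟨fun i => hdu t i _ (fun v => EE_stab D x hnilp t i v), ?_⟩, ?_, ?_⟩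
  · intro i j f hf
    ext v
    have hfp : ∀ w, f ((D.ρ i x) w) = (D.ρ j x) (f w) := fun w => by
      simpa using DFunLike.congr_fun (hf x) w
    simp only [LinearMap.comp_apply]
    exact lexp_natural hfp t v
  · intro i j k e he
    exact lexp_tensor (D.ρ i x) (D.ρ j x) (D.ρ k x) (hnilp i) (hnilp j) (hnilp k) e
      (by simpa [TannakaSetting.tensorρ] using he x) t
  · intro i hi
    exact lexp_of_zero (hi.2 x) t

include hdu in
lemma EE_isExp (t : F) : D.IsExpOf x t (EE D x hnilp t) :=
  ⟨EE_mem_M D x hnilp hdu t, fun i v => EE_stab D x hnilp t i v⟩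

lemma isExp_unique {t : F} {m : ∀ i, Module.End F (D.V i)} (hm : D.IsExpOf x t m) :
    m = EE D x hnilp t := by
  funext i
  ext v
  obtain ⟨N, hN⟩ := hm.2 i v
  obtain ⟨K, hK⟩ := hnilp i v
  rw [hN (max N K) (le_max_left _ _), EE_apply D x hnilp t i hK (le_max_right _ _), pSE_apply]
  exact Finset.sum_congr rfl fun k _ => by rw [ec]

lemma EE_phi (t : F) (i : D.ι) (φ : Module.Dual F (D.V i)) {K n : ℕ} {v : D.V i}
    (hK : ((D.ρ i x : Module.End F (D.V i)) ^ K) v = 0) (hn : K ≤ n) :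
    φ (EE D x hnilp t i v)
      = (qPoly n (fun k => φ (((D.ρ i x : Module.End F (D.V i)) ^ k) v))).eval t := by
  rw [EE_apply D x hnilp t i hK hn, pSE_apply, map_sum, qPoly_eval]
  exact Finset.sum_congr rfl fun k _ => by rw [map_smul, smul_eq_mul]

include hnilp in
lemma exists_special (HG : D.IsGoodSetting) (hx : x ≠ 0) :
    ∃ (i₀ : D.ι) (v₀ : D.V i₀) (φ₀ : Module.Dual F (D.V i₀)),
      φ₀ ∈ D.du i₀ ∧ (D.ρ i₀ x) ((D.ρ i₀ x) v₀) = 0 ∧ φ₀ ((D.ρ i₀ x) v₀) = 1 := by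
  classical
  have h1 : ¬ ∀ i, (D.ρ i x : Module.End F (D.V i)) = 0 := fun h => hx (HG.faithful x h)
  push_neg at h1
  obtain ⟨i₀, hi₀⟩ := h1
  have h2 : ∃ u, (D.ρ i₀ x) u ≠ 0 := by
    by_contra h
    push_neg at h
    exact hi₀ (LinearMap.ext fun u => h u)
  obtain ⟨u, hu⟩ := h2
  have hex : ∃ n, ((D.ρ i₀ x : Module.End F (D.V i₀)) ^ n) u = 0 := hnilp i₀ u
  set n₀ := Nat.find hex with hn₀def
  have hn₀ : ((D.ρ i₀ x : Module.End F (D.V i₀)) ^ n₀) u = 0 := Nat.find_spec hex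
  have h2le : 2 ≤ n₀ := by
    by_contra hlt
    push_neg at hlt
    interval_cases n₀
    · exact hu (by rw [show u = 0 from by simpa using hn₀, map_zero])
    · exact hu (by simpa using hn₀)
  set v₀ := ((D.ρ i₀ x : Module.End F (D.V i₀)) ^ (n₀ - 2)) u with hv₀
  have hAv : (D.ρ i₀ x) v₀ = ((D.ρ i₀ x : Module.End F (D.V i₀)) ^ (n₀ - 1)) u := by
    rw [hv₀, ← Module.End.mul_apply, ← pow_succ', show n₀ - 2 + 1 = n₀ - 1 from by omega]
  have hAv_ne : (D.ρ i₀ x) v₀ ≠ 0 := by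
    rw [hAv]
    exact Nat.find_min hex (by omega)
  have hA2 : (D.ρ i₀ x) ((D.ρ i₀ x) v₀) = 0 := by
    rw [hAv, ← Module.End.mul_apply, ← pow_succ', show n₀ - 1 + 1 = n₀ by omega]
    exact hn₀
  obtain ⟨φ, hφmem, hφne⟩ := HG.separating i₀ _ hAv_ne
  refine ⟨i₀, v₀, (φ ((D.ρ i₀ x) v₀))⁻¹ • φ, Submodule.smul_mem _ _ hφmem, hA2, ?_⟩
  simp [inv_mul_cancel₀ hφne]

lemma sep_eq (HG : D.IsGoodSetting) {i : D.ι} {w : D.V i}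
    (h : ∀ φ ∈ D.du i, φ w = 0) : w = 0 := by
  by_contra hw
  obtain ⟨φ, hφ, hne⟩ := HG.separating i w hw
  exact hne (h φ hφ)

/-- Pairs of a matrix coefficient (as a function on `M`) and its derivative along `y`. -/
def PairP (y : ∀ i, Module.End F (D.V i)) (f : ↥D.M → F) (d : F) : Prop :=
  ∃ (k : D.ι) (ξ : Module.Dual F (D.V k)) (u : D.V k), ξ ∈ D.du k ∧
    (∀ m : ↥D.M, f m = ξ ((m.1 k) u)) ∧ ξ ((y k) u) = d

/-- The conditions on a family `y` needed for the Pair calculus. -/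
structure YOk (y : ∀ i, Module.End F (D.V i)) : Prop where
  nat : ∀ (i j : D.ι) (f : D.V i →ₗ[F] D.V j), D.IsHom f → f ∘ₗ y i = y j ∘ₗ f
  ten : ∀ (i j k : D.ι) (e : D.V k ≃ₗ[F] (D.V i ⊗[F] D.V j)), D.IsTensorProd i j k e →
    e.toLinearMap ∘ₗ y k = (TensorProduct.map (y i) LinearMap.id
      + TensorProduct.map LinearMap.id (y j)) ∘ₗ e.toLinearMap
  triv : ∀ i, D.IsTrivOneDim i → y i = 0

lemma yok_zero : YOk D (fun _ => 0) := by
  refine ⟨fun i j f _ => by ext v; simp, fun i j k e _ => ?_, fun i _ => rfl⟩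
  have h1 : TensorProduct.map (0 : Module.End F (D.V i)) (LinearMap.id : D.V j →ₗ[F] D.V j)
      = 0 := TensorProduct.ext' fun u w => by simp
  have h2 : TensorProduct.map (LinearMap.id : D.V i →ₗ[F] D.V i) (0 : Module.End F (D.V j))
      = 0 := TensorProduct.ext' fun u w => by simp
  rw [h1, h2]
  ext v
  simp

lemma pair_base {y : ∀ i, Module.End F (D.V i)} (i : D.ι) (φ : Module.Dual F (D.V i))
    (v : D.V i) (hφ : φ ∈ D.du i) :
    PairP D y (fun m => φ ((m.1 i) v)) (φ ((y i) v)) :=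
  ⟨i, φ, v, hφ, fun _ => rfl, rfl⟩

lemma pair_smul {y : ∀ i, Module.End F (D.V i)} {f : ↥D.M → F} {d : F} (c : F)
    (h : PairP D y f d) : PairP D y (fun m => c * f m) (c * d) := by
  obtain ⟨k, ξ, u, h1, h2, h3⟩ := h
  refine ⟨k, c • ξ, u, Submodule.smul_mem _ _ h1, fun m => ?_, ?_⟩
  · show c * f m = _
    rw [h2 m, LinearMap.smul_apply, smul_eq_mul]
  · rw [LinearMap.smul_apply, smul_eq_mul, h3]

lemma pair_const (HG : D.IsGoodSetting) {y : ∀ i, Module.End F (D.V i)} (hy : YOk D y)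
    (a : F) : PairP D y (fun _ => a) 0 := by
  obtain ⟨i, hi⟩ := HG.exists_triv
  have hnt : Nontrivial (D.V i) := by
    have h1 : Module.finrank F (D.V i) = 1 := hi.1
    exact Module.nontrivial_of_finrank_pos (R := F) (by omega)
  obtain ⟨v, hv⟩ := exists_ne (0 : D.V i)
  obtain ⟨φ, hφ, hne⟩ := HG.separating i v hv
  refine ⟨i, (a * (φ v)⁻¹) • φ, v, Submodule.smul_mem _ _ hφ, fun m => ?_, ?_⟩
  · have hm1 : m.1 i = 1 := m.2.2.2 i hi
    show a = _
    rw [hm1, LinearMap.smul_apply, Module.End.one_apply, smul_eq_mul, mul_assoc,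
      inv_mul_cancel₀ hne, mul_one]
  · rw [hy.triv i hi]
    simp

lemma pair_add (HG : D.IsGoodSetting) {y : ∀ i, Module.End F (D.V i)} (hy : YOk D y)
    {f1 f2 : ↥D.M → F} {d1 d2 : F} (h1 : PairP D y f1 d1) (h2 : PairP D y f2 d2) :
    PairP D y (fun m => f1 m + f2 m) (d1 + d2) := by
  obtain ⟨k1, ξ1, u1, hm1, hf1, hv1⟩ := h1
  obtain ⟨k2, ξ2, u2, hm2, hf2, hv2⟩ := h2
  obtain ⟨n, e, he⟩ := HG.exists_sum k1 k2
  set p1 : D.V n →ₗ[F] D.V k1 := LinearMap.fst F (D.V k1) (D.V k2) ∘ₗ e.toLinearMap with hp1def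
  set p2 : D.V n →ₗ[F] D.V k2 := LinearMap.snd F (D.V k1) (D.V k2) ∘ₗ e.toLinearMap with hp2def
  have hp1 : D.IsHom p1 := by
    intro z
    ext w
    have hw := DFunLike.congr_fun (he z) w
    simp only [LinearMap.comp_apply, LinearEquiv.coe_coe] at hw ⊢
    rw [hp1def]
    simp only [LinearMap.comp_apply, LinearEquiv.coe_coe, hw, LinearMap.prodMap_apply,
      LinearMap.fst_apply]
  have hp2 : D.IsHom p2 := by
    intro z
    ext w
    have hw := DFunLike.congr_fun (he z) w
    simp only [LinearMap.comp_apply, LinearEquiv.coe_coe] at hw ⊢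
    rw [hp2def]
    simp only [LinearMap.comp_apply, LinearEquiv.coe_coe, hw, LinearMap.prodMap_apply,
      LinearMap.snd_apply]
  set u' : D.V n := e.symm (u1, u2) with hu'def
  have hpu1 : p1 u' = u1 := by
    rw [hp1def, hu'def]
    simp
  have hpu2 : p2 u' = u2 := by
    rw [hp2def, hu'def]
    simp
  refine ⟨n, e.toLinearMap.dualMap ((LinearMap.fst F (D.V k1) (D.V k2)).dualMap ξ1 +
      (LinearMap.snd F (D.V k1) (D.V k2)).dualMap ξ2), u',
    (HG.du_sum k1 k2 n e he _).2 ⟨ξ1, hm1, ξ2, hm2, rfl⟩, fun m => ?_, ?_⟩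
  · have hn1 : p1 ((m.1 n) u') = (m.1 k1) u1 := by
      have := DFunLike.congr_fun (m.2.1.2 n k1 p1 hp1) u'
      simp only [LinearMap.comp_apply] at this
      rw [this, hpu1]
    have hn2 : p2 ((m.1 n) u') = (m.1 k2) u2 := by
      have := DFunLike.congr_fun (m.2.1.2 n k2 p2 hp2) u'
      simp only [LinearMap.comp_apply] at this
      rw [this, hpu2]
    show f1 m + f2 m = _
    rw [hf1 m, hf2 m, LinearMap.dualMap_apply, LinearMap.add_apply,
      LinearMap.dualMap_apply, LinearMap.dualMap_apply, ← hn1, ← hn2, hp1def, hp2def]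
    simp only [LinearMap.comp_apply, LinearEquiv.coe_coe]
  · have hn1 : p1 ((y n) u') = (y k1) u1 := by
      have := DFunLike.congr_fun (hy.nat n k1 p1 hp1) u'
      simp only [LinearMap.comp_apply] at this
      rw [this, hpu1]
    have hn2 : p2 ((y n) u') = (y k2) u2 := by
      have := DFunLike.congr_fun (hy.nat n k2 p2 hp2) u'
      simp only [LinearMap.comp_apply] at this
      rw [this, hpu2]
    rw [LinearMap.dualMap_apply, LinearMap.add_apply, LinearMap.dualMap_apply,
      LinearMap.dualMap_apply, ← hv1, ← hv2, ← hn1, ← hn2, hp1def, hp2def]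
    simp only [LinearMap.comp_apply, LinearEquiv.coe_coe]

lemma pair_mul (HG : D.IsGoodSetting) {y : ∀ i, Module.End F (D.V i)} (hy : YOk D y)
    {f1 f2 : ↥D.M → F} {d1 d2 : F} (h1 : PairP D y f1 d1) (h2 : PairP D y f2 d2) :
    PairP D y (fun m => f1 m * f2 m) (d1 * f2 D.oneM + f1 D.oneM * d2) := by
  obtain ⟨k1, ξ1, u1, hm1, hf1, hv1⟩ := h1
  obtain ⟨k2, ξ2, u2, hm2, hf2, hv2⟩ := h2
  obtain ⟨n, e, he⟩ := HG.exists_tensor k1 k2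
  have hone1 : f1 D.oneM = ξ1 u1 := by
    rw [hf1 D.oneM]
    rfl
  have hone2 : f2 D.oneM = ξ2 u2 := by
    rw [hf2 D.oneM]
    rfl
  refine ⟨n, e.toLinearMap.dualMap (D.tensorDual ξ1 ξ2), e.symm (u1 ⊗ₜ[F] u2),
    HG.du_tensor k1 k2 n e he ξ1 hm1 ξ2 hm2, fun m => ?_, ?_⟩
  · have hten := DFunLike.congr_fun (m.2.2.1 k1 k2 n e he) (e.symm (u1 ⊗ₜ[F] u2))
    simp only [LinearMap.comp_apply, LinearEquiv.coe_coe, LinearEquiv.apply_symm_apply] at hten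
    show f1 m * f2 m = _
    rw [hf1 m, hf2 m, LinearMap.dualMap_apply]
    show _ = (D.tensorDual ξ1 ξ2) (e ((m.1 n) (e.symm (u1 ⊗ₜ[F] u2))))
    rw [hten, TensorProduct.map_tmul, TannakaSetting.tensorDual,
      TensorProduct.dualDistrib_apply]
  · have hten := DFunLike.congr_fun (hy.ten k1 k2 n e he) (e.symm (u1 ⊗ₜ[F] u2))
    simp only [LinearMap.comp_apply, LinearEquiv.coe_coe, LinearEquiv.apply_symm_apply,
      LinearMap.add_apply] at hten
    rw [LinearMap.dualMap_apply]
    show (D.tensorDual ξ1 ξ2) (e ((y n) (e.symm (u1 ⊗ₜ[F] u2)))) = _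
    rw [hten, TensorProduct.map_tmul, TensorProduct.map_tmul, TannakaSetting.tensorDual,
      map_add, TensorProduct.dualDistrib_apply, TensorProduct.dualDistrib_apply,
      LinearMap.id_apply, LinearMap.id_apply, hv1, hv2, hone1, hone2]

lemma pair_congr {y : ∀ i, Module.End F (D.V i)} {f f' : ↥D.M → F} {d d' : F}
    (h : PairP D y f d) (hf : ∀ m, f' m = f m) (hd : d' = d) : PairP D y f' d' := by
  obtain ⟨k, ξ, u, h1, h2, h3⟩ := h
  exact ⟨k, ξ, u, h1, fun m => (hf m).trans (h2 m), by rw [hd, ← h3]⟩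

lemma pair_poly (HG : D.IsGoodSetting) {y : ∀ i, Module.End F (D.V i)} (hy : YOk D y)
    {h0 : ↥D.M → F} {c : F} (hp : PairP D y h0 c) (h1 : h0 D.oneM = 0)
    (q : Polynomial F) :
    PairP D y (fun m => q.eval (h0 m)) ((q.derivative.eval 0) * c) := by
  induction q using Polynomial.induction_on with
  | C a => simpa using pair_const D HG hy a
  | add p q hp1 hq1 => simpa [add_mul] using pair_add D HG hy hp1 hq1
  | monomial n a ih =>
    have hmul := pair_mul D HG hy ih hp
    have hfun : (fun (m : ↥D.M) => (Polynomial.C a * Polynomial.X ^ n).eval (h0 m) * h0 m)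
        = (fun (m : ↥D.M) => (Polynomial.C a * Polynomial.X ^ (n + 1)).eval (h0 m)) := by
      funext m
      simp only [Polynomial.eval_mul, Polynomial.eval_pow, Polynomial.eval_C,
        Polynomial.eval_X]
      ring
    have hval : ((Polynomial.C a * Polynomial.X ^ n).derivative.eval 0) * c * h0 D.oneM
        + (Polynomial.C a * Polynomial.X ^ n).eval (h0 D.oneM) * c
        = ((Polynomial.C a * Polynomial.X ^ (n + 1)).derivative.eval 0) * c := by
      rw [h1]
      rcases n with _ | n
      · simp
      · simp [zero_pow]
    rw [← hfun, ← hval]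
    exact hmul

lemma subAct_coe (s : D.SubIdx x) (n : ℕ) (u : D.subMod x s) :
    ((((D.subAct x s) ^ n) u : ↥s.2.1) : D.V s.1)
      = ((D.ρ s.1 x : Module.End F (D.V s.1)) ^ n) (u : D.V s.1) := by
  show ((((D.ρ s.1 x : Module.End F (D.V s.1)).restrict
      (fun w hw => s.2.2.2 w hw)) ^ n) u : D.V s.1) = _
  rw [Module.End.pow_restrict, LinearMap.restrict_coe_apply]

include hnilp in
lemma subkill (s : D.SubIdx x) (u : D.subMod x s) :
    ∃ n : ℕ, ((D.subAct x s) ^ n) u = 0 := by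
  obtain ⟨n, hn⟩ := hnilp s.1 (u : D.V s.1)
  refine ⟨n, ?_⟩
  have := subAct_coe D x s n u
  rw [hn] at this
  exact ZeroMemClass.coe_eq_zero.1 this

/-- The one-parameter subgroup of `M(F·x)`. -/
noncomputable def dd (t : F) : ∀ s : D.SubIdx x, Module.End F (D.subMod x s) :=
  fun s => lexp (D.subAct x s) (subkill D x hnilp s) t

lemma dd_mem_MFe (t : F) : dd D x hnilp t ∈ D.MFe x := by
  refine ⟨?_, ?_, ?_⟩
  · intro s s' f hf
    refine LinearMap.ext fun u => ?_
    have hfp : ∀ w, f ((D.subAct x s) w) = (D.subAct x s') (f w) := fun w => by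
      simpa using DFunLike.congr_fun hf w
    simp only [LinearMap.comp_apply]
    exact lexp_natural hfp t u
  · intro s s' s'' E hE
    exact lexp_tensor _ _ _ (subkill D x hnilp s) (subkill D x hnilp s')
      (subkill D x hnilp s'') E hE t
  · intro s _ h2
    exact lexp_of_zero h2 t

lemma dd_add (t t' : F) : dd D x hnilp (t + t') = dd D x hnilp t * dd D x hnilp t' :=
  funext fun s => lexp_add _ _ t t'

lemma dd_zero : dd D x hnilp 0 = 1 :=
  funext fun s => lexp_zero _ _

lemma dd_induced (t : F) (i : D.ι) : D.IsInduced x (dd D x hnilp t) i (EE D x hnilp t i) := by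
  intro U h1 h2 u
  set s : D.SubIdx x := ⟨i, ⟨U, h1, h2⟩⟩ with hs
  obtain ⟨K, hK⟩ := subkill D x hnilp s u
  have hKc : ((D.ρ i x : Module.End F (D.V i)) ^ K) (u : D.V i) = 0 := by
    have := subAct_coe D x s K u
    rw [hK] at this
    exact this.symm.trans (ZeroMemClass.coe_zero _)
  have hdd : dd D x hnilp t s u = pSE (D.subAct x s) t K u :=
    lexp_eq (a := D.subAct x s) (h := subkill D x hnilp s) t hK le_rfl
  rw [EE_apply D x hnilp t i hKc le_rfl, hdd]
  rw [pSE_apply, pSE_apply, AddSubmonoidClass.coe_finset_sum]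
  refine Finset.sum_congr rfl fun k _ => ?_
  rw [SetLike.val_smul, subAct_coe D x s k u]

set_option maxHeartbeats 4000000 in
lemma dd_dense : D.DenseMFe x (Set.range (dd D x hnilp)) := by
  intro s ψ u hvan m hm
  classical
  obtain ⟨n₀, hn₀⟩ := subkill D x hnilp s u
  have hk : ∀ k : ℕ, ψ (((D.subAct x s) ^ k) u) = 0 := by
    have hpoly : ∀ t : F, (qPoly n₀ (fun k => ψ (((D.subAct x s) ^ k) u))).eval t = 0 := by
      intro t
      have h1 := hvan (dd D x hnilp t) ⟨t, rfl⟩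
      have hdd : dd D x hnilp t s u = pSE (D.subAct x s) t n₀ u :=
        lexp_eq (a := D.subAct x s) (h := subkill D x hnilp s) t hn₀ le_rfl
      rw [hdd] at h1
      rw [qPoly_eval, ← h1, pSE_apply, map_sum]
      exact Finset.sum_congr rfl fun k _ => by rw [map_smul, smul_eq_mul]
    intro k
    rcases lt_or_ge k n₀ with h | h
    · exact qPoly_coeff_eq_zero hpoly h
    · rw [kill_mono hn₀ h, map_zero]
  have hψU' : ∀ w ∈ Submodule.span F
      (Set.range fun k : ℕ => ((D.subAct x s) ^ k) u), ψ w = 0 := by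
    intro w hw
    induction hw using Submodule.span_induction with
    | mem w hwmem => obtain ⟨k, rfl⟩ := hwmem; exact hk k
    | zero => exact map_zero ψ
    | add w1 w2 _ _ hw1 hw2 => rw [map_add, hw1, hw2, add_zero]
    | smul c w _ hw1 => rw [map_smul, hw1, smul_zero]
  have haU' : ∀ w ∈ Submodule.span F
      (Set.range fun k : ℕ => ((D.subAct x s) ^ k) u),
      (D.subAct x s) w ∈ Submodule.span F
        (Set.range fun k : ℕ => ((D.subAct x s) ^ k) u) := by
    intro w hw
    induction hw using Submodule.span_induction with
    | mem w hwmem =>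
        obtain ⟨k, rfl⟩ := hwmem
        refine Submodule.subset_span ⟨k + 1, ?_⟩
        show ((D.subAct x s) ^ (k + 1)) u = (D.subAct x s) (((D.subAct x s) ^ k) u)
        rw [pow_succ', Module.End.mul_apply]
    | zero => rw [map_zero]; exact Submodule.zero_mem _
    | add w1 w2 _ _ hw1 hw2 => rw [map_add]; exact Submodule.add_mem _ hw1 hw2
    | smul c w _ hw1 => rw [map_smul]; exact Submodule.smul_mem _ c hw1
  haveI hfds : FiniteDimensional F (D.subMod x s) := s.2.2.1
  have hfd'' : FiniteDimensional F
      ↥((Submodule.span F (Set.range fun k : ℕ => ((D.subAct x s) ^ k) u)).map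
        (s.2.1).subtype) :=
    LinearEquiv.finiteDimensional
      (Submodule.equivMapOfInjective _ (Submodule.injective_subtype _) _)
  have hinv'' : ∀ w ∈ (Submodule.span F
        (Set.range fun k : ℕ => ((D.subAct x s) ^ k) u)).map (s.2.1).subtype,
      (D.ρ s.1 x) w ∈ (Submodule.span F
        (Set.range fun k : ℕ => ((D.subAct x s) ^ k) u)).map (s.2.1).subtype := by
    intro w hw
    obtain ⟨w', hw', rfl⟩ := Submodule.mem_map.1 hw
    have hcoe : (D.ρ s.1 x) ((s.2.1).subtype w') = (s.2.1).subtype ((D.subAct x s) w') := by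
      have := subAct_coe D x s 1 w'
      simp only [pow_one] at this
      exact this.symm
    rw [hcoe]
    exact Submodule.mem_map_of_mem (haU' w' hw')
  set s' : D.SubIdx x := ⟨s.1, ⟨(Submodule.span F
      (Set.range fun k : ℕ => ((D.subAct x s) ^ k) u)).map (s.2.1).subtype,
    hfd'', fun w hw => hinv'' w hw⟩⟩ with hs'
  have hle : s'.2.1 ≤ s.2.1 := by
    intro w hw
    obtain ⟨w', _, rfl⟩ := Submodule.mem_map.1 hw
    exact w'.2
  set ι : D.subMod x s' →ₗ[F] D.subMod x s := Submodule.inclusion hle with hι0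
  have hι : ι ∘ₗ D.subAct x s' = D.subAct x s ∘ₗ ι := by
    ext w
    simp only [LinearMap.comp_apply]
    have hLc : ((ι ((D.subAct x s') w) : ↥s.2.1) : D.V s.1)
        = (D.ρ s.1 x) (w : D.V s.1) := by
      rw [hι0, Submodule.coe_inclusion]
      have := subAct_coe D x s' 1 w
      simp only [pow_one] at this
      exact this
    have hRc : (((D.subAct x s) (ι w) : ↥s.2.1) : D.V s.1)
        = (D.ρ s.1 x) (w : D.V s.1) := by
      have := subAct_coe D x s 1 (ι w)
      simp only [pow_one] at this
      rw [this, hι0, Submodule.coe_inclusion]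
    rw [hLc, hRc]
  have hu' : u ∈ Submodule.span F (Set.range fun k : ℕ => ((D.subAct x s) ^ k) u) :=
    Submodule.subset_span ⟨0, by simp⟩
  set uhat : D.subMod x s' := ⟨(u : D.V s.1), Submodule.mem_map_of_mem hu'⟩ with huhat
  have hιuhat : ι uhat = u := Subtype.ext rfl
  have hnat := DFunLike.congr_fun (hm.1 s' s ι hι) uhat
  simp only [LinearMap.comp_apply] at hnat
  rw [hιuhat] at hnat
  rw [← hnat]
  obtain ⟨w', hw', hww⟩ := Submodule.mem_map.1 (m s' uhat).2
  have hz : ι (m s' uhat) = w' := Subtype.ext (by rw [hι0, Submodule.coe_inclusion]; exact hww.symm)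
  rw [hz]
  exact hψU' w' hw'

include hnilp in
lemma locfin (i : D.ι) (v : D.V i) : ∃ U : Submodule F (D.V i),
    v ∈ U ∧ FiniteDimensional F ↥U ∧ ∀ u ∈ U, D.ρ i x u ∈ U := by
  obtain ⟨K, hK⟩ := hnilp i v
  refine ⟨Submodule.span F (Set.range fun k : Fin (K + 1) =>
    ((D.ρ i x : Module.End F (D.V i)) ^ (k : ℕ)) v), ?_, ?_, ?_⟩
  · exact Submodule.subset_span ⟨⟨0, by omega⟩, by simp⟩
  · exact FiniteDimensional.span_of_finite F (Set.finite_range _)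
  · intro u hu
    induction hu using Submodule.span_induction with
    | mem w hwmem =>
        obtain ⟨⟨k, hklt⟩, rfl⟩ := hwmem
        show (D.ρ i x) (((D.ρ i x : Module.End F (D.V i)) ^ k) v) ∈ _
        have hstep : (D.ρ i x) (((D.ρ i x : Module.End F (D.V i)) ^ k) v)
            = ((D.ρ i x : Module.End F (D.V i)) ^ (k + 1)) v := by
          rw [pow_succ', Module.End.mul_apply]
        rw [hstep]
        rcases lt_or_ge (k + 1) (K + 1) with h | h
        · exact Submodule.subset_span ⟨⟨k + 1, h⟩, rfl⟩
        · rw [kill_mono hK (by omega)]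
          exact Submodule.zero_mem _
    | zero => rw [map_zero]; exact Submodule.zero_mem _
    | add w1 w2 _ _ hw1 hw2 => rw [map_add]; exact Submodule.add_mem _ hw1 hw2
    | smul c w _ hw1 => rw [map_smul]; exact Submodule.smul_mem _ c hw1

include hnilp hdu in
lemma isIntLocFin : D.IsIntLocFin x := by
  refine ⟨locfin D x hnilp, Set.range (dd D x hnilp), ?_, ⟨0, dd_zero D x hnilp⟩, ?_, ?_, ?_⟩
  · rintro d ⟨t, rfl⟩
    exact dd_mem_MFe D x hnilp t
  · rintro a ⟨t, rfl⟩ b ⟨t', rfl⟩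
    exact ⟨t + t', dd_add D x hnilp t t'⟩
  · exact dd_dense D x hnilp
  · rintro d ⟨t, rfl⟩ i
    exact ⟨EE D x hnilp t i, dd_induced D x hnilp t i,
      hdu t i _ (fun v => EE_stab D x hnilp t i v)⟩

end DLayer

end S16


/-- **One-parameter unipotent subgroups of `M`.**
Let `x ∈ g`, `x ≠ 0`, act locally nilpotently on every object of `C`, with
`exp(t x_V) ∈ End_{V^du}(V)` for all `t ∈ F`.  Then: (a) for every `t ∈ F` there is an element
`exp(t x) ∈ M` acting on every object by `exp(t x_V)`; (b) `u_x : (F,+) → M`, `t ↦ exp(t x)`,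
is a morphism of monoids and a closed embedding of sets with coordinate rings (`F` carrying the
polynomial functions); (c) `Lie(U_x) = F·x` for the image `U_x` of `u_x`.  In particular, `x`
is an integrable locally finite element of `g`. -/
theorem stmt_16 (D : TannakaSetting F g) (HG : D.IsGoodSetting)
    (x : g) (hx : x ≠ 0)
    (hnilp : ∀ (i : D.ι) (v : D.V i), ∃ n : ℕ,
      ((D.ρ i x : Module.End F (D.V i)) ^ n) v = 0)
    (hdu : ∀ (t : F) (i : D.ι) (f : Module.End F (D.V i)),
      (∀ v : D.V i, ∃ N : ℕ, ∀ n ≥ N,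
        f v = ∑ k ∈ Finset.range n,
          (t ^ k * ((Nat.factorial k : F)⁻¹)) • (((D.ρ i x : Module.End F (D.V i)) ^ k) v)) →
      D.PreservesDu i f) :
    -- (a) the elements `exp(t x) ∈ M` exist:
    (∀ t : F, ∃ m, D.IsExpOf x t m) ∧
    -- (b) `u_x` is a morphism of monoids:
    (∀ m, D.IsExpOf x 0 m → m = 1) ∧
    (∀ t t' m m' m'', D.IsExpOf x t m → D.IsExpOf x t' m' → D.IsExpOf x (t + t') m'' →
      m'' = m * m') ∧
    -- `u_x` is injective:
    (∀ t t' m, D.IsExpOf x t m → D.IsExpOf x t' m → t = t') ∧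
    -- the comorphism of `u_x` exists (with values in the polynomial functions on `F`):
    (∀ f ∈ D.coordRing, ∃ p : Polynomial F,
      ∀ (t : F) (m : ↥D.M), D.IsExpOf x t m.1 → f m = p.eval t) ∧
    -- the comorphism is surjective onto the polynomial functions, so `u_x` is an embedding:
    (∀ p : Polynomial F, ∃ f ∈ D.coordRing,
      ∀ (t : F) (m : ↥D.M), D.IsExpOf x t m.1 → f m = p.eval t) ∧
    -- the image `U_x` of `u_x` is Zariski closed in `M`:
    (∀ m : ↥D.M,
      (∀ f ∈ D.coordRing, (∀ m' : ↥D.M, (∃ t, D.IsExpOf x t m'.1) → f m' = 0) → f m = 0) →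
      ∃ t, D.IsExpOf x t m.1) ∧
    -- (c) `Lie(U_x) = F·x`:
    (D.LieOf {m : ↥D.M | ∃ t, D.IsExpOf x t m.1} =
      {y | ∃ c : F, y = fun i => c • (D.ρ i x : Module.End F (D.V i))}) ∧
    -- `x` is an integrable locally finite element of `g`:
    D.IsIntLocFin x := by
  classical
  obtain ⟨i₀, v₀, φ₀, hφ₀mem, hA2, hφ₀1⟩ := S16.exists_special D x hnilp HG hx
  have hEmem : ∀ t : F, S16.EE D x hnilp t ∈ D.M := S16.EE_mem_M D x hnilp hdu
  have hEexp : ∀ t : F, D.IsExpOf x t (S16.EE D x hnilp t) := S16.EE_isExp D x hnilp hdu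
  have huniq : ∀ {t : F} {m : ∀ i, Module.End F (D.V i)}, D.IsExpOf x t m →
      m = S16.EE D x hnilp t := fun h => S16.isExp_unique D x hnilp h
  have hK2 : ((D.ρ i₀ x : Module.End F (D.V i₀)) ^ 2) v₀ = 0 := by
    rw [pow_two, Module.End.mul_apply]
    exact hA2
  have hcoord : ∀ t : F, φ₀ (S16.EE D x hnilp t i₀ v₀) = φ₀ v₀ + t := by
    intro t
    rw [S16.EE_apply D x hnilp t i₀ hK2 le_rfl, S16.pSE_apply, Finset.sum_range_succ,
      Finset.sum_range_one]
    have h0 : ((D.ρ i₀ x : Module.End F (D.V i₀)) ^ 0) v₀ = v₀ := rfl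
    have h1 : ((D.ρ i₀ x : Module.End F (D.V i₀)) ^ 1) v₀ = (D.ρ i₀ x) v₀ := by rw [pow_one]
    rw [h0, h1, map_add, map_smul, map_smul, smul_eq_mul, smul_eq_mul, hφ₀1,
      S16.ec_zero, S16.ec_one, one_mul, mul_one]
  have hhE : ∀ (t : F) (m : ↥D.M), m.1 = S16.EE D x hnilp t →
      φ₀ ((m.1 i₀) v₀) - φ₀ v₀ = t := by
    intro t m hm
    rw [congrFun hm i₀, hcoord t]
    ring
  have hhpair : ∀ (y : ∀ i, Module.End F (D.V i)), S16.YOk D y →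
      S16.PairP D y (fun m : ↥D.M => φ₀ ((m.1 i₀) v₀) - φ₀ v₀) (φ₀ ((y i₀) v₀)) := by
    intro y hy
    refine S16.pair_congr D (S16.pair_add D HG hy (S16.pair_base D i₀ φ₀ v₀ hφ₀mem)
      (S16.pair_const D HG hy (-(φ₀ v₀)))) (fun m => ?_) ?_
    · show φ₀ ((m.1 i₀) v₀) - φ₀ v₀ = φ₀ ((m.1 i₀) v₀) + -(φ₀ v₀)
      ring
    · exact (add_zero _).symm
  have hh1 : (fun m : ↥D.M => φ₀ ((m.1 i₀) v₀) - φ₀ v₀) D.oneM = 0 := sub_self (φ₀ v₀)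
  have hy0 : S16.YOk D (fun _ => 0) := S16.yok_zero D
  have hEE0 : S16.EE D x hnilp 0 = 1 := funext fun i => S16.lexp_zero _ _
  have hEEadd : ∀ t t' : F, S16.EE D x hnilp (t + t')
      = S16.EE D x hnilp t * S16.EE D x hnilp t' :=
    fun t t' => funext fun i => S16.lexp_add _ _ t t'
  refine ⟨?_, ?_, ?_, ?_, ?_, ?_, ?_, ?_, ?_⟩
  -- (a)
  · exact fun t => ⟨S16.EE D x hnilp t, hEexp t⟩
  -- (b1)
  · intro m hm
    exact (huniq hm).trans hEE0
  -- (b2)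
  · intro t t' m m' m'' hm hm' hm''
    rw [huniq hm, huniq hm', huniq hm'']
    exact hEEadd t t'
  -- (b3)
  · intro t t' m hm hm'
    have h := (huniq hm).symm.trans (huniq hm')
    have h2 := congrArg φ₀ (DFunLike.congr_fun (congrFun h i₀) v₀)
    rw [hcoord t, hcoord t'] at h2
    exact add_left_cancel h2
  -- (b4)
  · intro f hf
    obtain ⟨i, φ, v, hφ, rfl⟩ := hf
    obtain ⟨K, hK⟩ := hnilp i v
    refine ⟨S16.qPoly K (fun k => φ (((D.ρ i x : Module.End F (D.V i)) ^ k) v)), ?_⟩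
    intro t m hm
    show φ ((m.1 i) v) = _
    rw [congrFun (huniq hm) i]
    exact S16.EE_phi D x hnilp t i φ hK le_rfl
  -- (b5)
  · intro p
    obtain ⟨k, ξ, u, hξ, hfun, _⟩ := S16.pair_poly D HG hy0 (hhpair _ hy0) hh1 p
    refine ⟨D.matCoef k ξ u, ⟨k, ξ, u, hξ, rfl⟩, ?_⟩
    intro t m hm
    show ξ ((m.1 k) u) = p.eval t
    rw [← hfun m]
    dsimp only
    rw [hhE t m (huniq hm)]
  -- (b6)
  · intro m hclosed
    set tt : F := φ₀ ((m.1 i₀) v₀) - φ₀ v₀ with htt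
    refine ⟨tt, ?_⟩
    have hpt : ∀ (i : D.ι) (v : D.V i),
        m.1 i v = S16.EE D x hnilp tt i v := by
      intro i v
      rw [← sub_eq_zero]
      apply S16.sep_eq D HG
      intro φ hφ
      rw [map_sub, sub_eq_zero]
      obtain ⟨K, hK⟩ := hnilp i v
      obtain ⟨k, ξ, u, hξ, hfun, _⟩ := S16.pair_add D HG hy0 (S16.pair_base D i φ v hφ)
        (S16.pair_smul D (-1) (S16.pair_poly D HG hy0 (hhpair _ hy0) hh1
          (S16.qPoly K (fun j => φ (((D.ρ i x : Module.End F (D.V i)) ^ j) v)))))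
      have hvanish : ∀ m' : ↥D.M, (∃ s, D.IsExpOf x s m'.1) → D.matCoef k ξ u m' = 0 := by
        rintro m' ⟨s, hs⟩
        show ξ ((m'.1 k) u) = 0
        rw [← hfun m']
        dsimp only
        rw [hhE s m' (huniq hs), congrFun (huniq hs) i,
          S16.EE_phi D x hnilp s i φ hK le_rfl]
        ring
      have h0 := hclosed (D.matCoef k ξ u) ⟨k, ξ, u, hξ, rfl⟩ hvanish
      have h3 := hfun m
      dsimp only at h3
      rw [show D.matCoef k ξ u m = ξ ((m.1 k) u) from rfl] at h0
      rw [h0] at h3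
      rw [S16.EE_phi D x hnilp _ i φ hK le_rfl]
      linear_combination h3
    have hgoal : m.1 = S16.EE D x hnilp tt :=
      funext fun i => LinearMap.ext fun v => hpt i v
    have hres := hEexp tt
    rw [← hgoal] at hres
    exact hres
  -- (c)
  · ext y
    simp only [Set.mem_setOf_eq]
    constructor
    · intro hy
      obtain ⟨hyLie, hyIdeal⟩ := hy
      have hyok : S16.YOk D y := ⟨hyLie.1.2, hyLie.2.1, hyLie.2.2.1⟩
      refine ⟨φ₀ ((y i₀) v₀), ?_⟩
      funext i
      ext v
      show y i v = (φ₀ ((y i₀) v₀)) • (D.ρ i x) v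
      rw [← sub_eq_zero]
      apply S16.sep_eq D HG
      intro φ hφ
      rw [map_sub, sub_eq_zero, map_smul, smul_eq_mul]
      obtain ⟨K0, hK0⟩ := hnilp i v
      have hK : ((D.ρ i x : Module.End F (D.V i)) ^ (max K0 2)) v = 0 :=
        S16.kill_mono hK0 (le_max_left _ _)
      have h1lt : 1 < max K0 2 := lt_of_lt_of_le one_lt_two (le_max_right K0 2)
      set q := S16.qPoly (max K0 2)
        (fun j => φ (((D.ρ i x : Module.End F (D.V i)) ^ j) v)) with hqdef
      have hd1 : (Polynomial.derivative q).eval 0 = φ ((D.ρ i x) v) := by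
        rw [← Polynomial.coeff_zero_eq_eval_zero, Polynomial.coeff_derivative, hqdef,
          S16.qPoly_coeff _ h1lt]
        simp [pow_one]
      obtain ⟨k, ξ, u, hξ, hfun, hval⟩ := S16.pair_add D HG hyok (S16.pair_base D i φ v hφ)
        (S16.pair_smul D (-1) (S16.pair_poly D HG hyok (hhpair _ hyok) hh1 q))
      have hvanish : ∀ n ∈ {m : ↥D.M | ∃ t, D.IsExpOf x t m.1},
          D.matCoef k ξ u n = 0 := by
        rintro m' ⟨s, hs⟩
        show ξ ((m'.1 k) u) = 0
        rw [← hfun m']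
        dsimp only
        rw [hhE s m' (huniq hs), congrFun (huniq hs) i,
          S16.EE_phi D x hnilp s i φ hK le_rfl, hqdef]
        ring
      have h0 := hyIdeal k ξ u hξ hvanish
      have h4 := h0.symm.trans hval
      rw [hd1] at h4
      linear_combination (-1 : F) * h4
    · rintro ⟨c, rfl⟩
      refine ⟨⟨⟨?_, ?_⟩, ?_, ?_, ?_⟩, ?_⟩
      · intro i φ hφ
        have hsm : (c • (D.ρ i x : Module.End F (D.V i))).dualMap φ
            = c • ((D.ρ i x : Module.End F (D.V i)).dualMap φ) := by
          ext w
          simp [LinearMap.dualMap_apply]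
        show (c • (D.ρ i x : Module.End F (D.V i))).dualMap φ ∈ D.du i
        rw [hsm]
        exact Submodule.smul_mem _ _ (HG.du_g i x φ hφ)
      · intro i j f hf
        show f ∘ₗ (c • (D.ρ i x : Module.End F (D.V i)))
          = (c • (D.ρ j x : Module.End F (D.V j))) ∘ₗ f
        rw [LinearMap.comp_smul, LinearMap.smul_comp, hf x]
      · intro i j k e he
        have he' := he x
        rw [TannakaSetting.tensorρ] at he'
        have hm1 : TensorProduct.map (c • (D.ρ i x : Module.End F (D.V i)))
            (LinearMap.id : D.V j →ₗ[F] D.V j)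
            = c • TensorProduct.map (D.ρ i x : Module.End F (D.V i)) LinearMap.id :=
          TensorProduct.ext' fun u w => by
            simp [TensorProduct.map_tmul, TensorProduct.smul_tmul']
        have hm2 : TensorProduct.map (LinearMap.id : D.V i →ₗ[F] D.V i)
            (c • (D.ρ j x : Module.End F (D.V j)))
            = c • TensorProduct.map LinearMap.id (D.ρ j x : Module.End F (D.V j)) :=
          TensorProduct.ext' fun u w => by
            simp [TensorProduct.map_tmul]
        show e.toLinearMap ∘ₗ (c • (D.ρ k x : Module.End F (D.V k))) = _
        rw [hm1, hm2, ← smul_add, LinearMap.comp_smul, LinearMap.smul_comp, he']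
      · intro i hi
        show c • (D.ρ i x : Module.End F (D.V i)) = 0
        rw [hi.2 x, smul_zero]
      · refine ⟨fun f => if hq : ∃ qq : Polynomial F,
            ∀ s : F, f ⟨S16.EE D x hnilp s, hEmem s⟩ = qq.eval s
          then c * (hq.choose.coeff 1) else 0, ?_⟩
        intro i φ v hφ
        obtain ⟨K0, hK0⟩ := hnilp i v
        have hK : ((D.ρ i x : Module.End F (D.V i)) ^ (max K0 2)) v = 0 :=
          S16.kill_mono hK0 (le_max_left _ _)
        have h1lt : 1 < max K0 2 := lt_of_lt_of_le one_lt_two (le_max_right K0 2)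
        have hex : ∃ qq : Polynomial F, ∀ s : F,
            D.matCoef i φ v ⟨S16.EE D x hnilp s, hEmem s⟩ = qq.eval s :=
          ⟨S16.qPoly (max K0 2) (fun j => φ (((D.ρ i x : Module.End F (D.V i)) ^ j) v)),
            fun s => S16.EE_phi D x hnilp s i φ hK le_rfl⟩
        dsimp only
        rw [dif_pos hex]
        have hqe : hex.choose = S16.qPoly (max K0 2)
            (fun j => φ (((D.ρ i x : Module.End F (D.V i)) ^ j) v)) :=
          Polynomial.funext fun r => by
            rw [← hex.choose_spec r]
            exact S16.EE_phi D x hnilp r i φ hK le_rfl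
        rw [hqe, S16.qPoly_coeff _ h1lt]
        show c * ((Nat.factorial 1 : F)⁻¹ * φ (((D.ρ i x : Module.End F (D.V i)) ^ 1) v))
          = φ ((c • (D.ρ i x : Module.End F (D.V i))) v)
        simp [pow_one]
      · intro i φ v hφ hvan
        show φ ((c • (D.ρ i x : Module.End F (D.V i))) v) = 0
        obtain ⟨K0, hK0⟩ := hnilp i v
        have hK : ((D.ρ i x : Module.End F (D.V i)) ^ (max K0 2)) v = 0 :=
          S16.kill_mono hK0 (le_max_left _ _)
        have h1lt : 1 < max K0 2 := lt_of_lt_of_le one_lt_two (le_max_right K0 2)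
        have hpoly : ∀ s : F, (S16.qPoly (max K0 2)
            (fun j => φ (((D.ρ i x : Module.End F (D.V i)) ^ j) v))).eval s = 0 := by
          intro s
          rw [← S16.EE_phi D x hnilp s i φ hK le_rfl]
          exact hvan ⟨S16.EE D x hnilp s, hEmem s⟩ ⟨s, hEexp s⟩
        have hc1 : φ (((D.ρ i x : Module.End F (D.V i)) ^ 1) v) = 0 :=
          S16.qPoly_coeff_eq_zero hpoly h1lt
        rw [pow_one] at hc1
        simp [hc1]
  -- integrable locally finite
  · exact S16.isIntLocFin D x hnilp hdu
end
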